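/- arXiv:2105.03081 — 4 statements merged into one kernel-verified Lean document; each statement's English description precedes it below -/
import Mathlib

section
/- Fixing γ_acc ∈ (0,1) and r_n < 0, there exists γ' ∈ (0,1) such that for every γ ∈ (γ', 1), every policy π* that is optimal for discount γ, and every state s ∈ S: μ^{π*}_s(Safe) = max_π μ^π_s(Safe), i.e., an optimal policy attains the maximum satisfaction probability of the safety condition at every state. -/
open MeasureTheory Set
open scoped ENNReal Classical

variable {S : Type*}

def IsPathMeasure [MeasurableSpace S] (P : S → PMF S) (μ : S → Measure (ℕ → S)) : Prop :=
  (∀ s, IsProbabilityMeasure (μ s)) ∧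
    ∀ (s : S) (n : ℕ) (x : ℕ → S),
      μ s {ω | ∀ i ≤ n, ω i = x i} =
        (if x 0 = s then 1 else 0) * ∏ i ∈ Finset.range n, (P (x i)) (x (i + 1))

noncomputable def Rw (Acc : Set S) (γacc rn : ℝ) (s : S) : ℝ :=
  if s ∈ Acc then (1 - γacc) * rn else 0

noncomputable def Γw (Acc : Set S) (γacc γ : ℝ) (s : S) : ℝ :=
  if s ∈ Acc then γacc else γ

noncomputable def Ret (Acc : Set S) (γacc γ rn : ℝ) (ω : ℕ → S) : ℝ :=
  ∑' t : ℕ, Rw Acc γacc rn (ω (t + 1)) * ∏ k ∈ Finset.range t, Γw Acc γacc γ (ω (k + 1))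

noncomputable def Val [MeasurableSpace S] (Acc : Set S) (γacc γ rn : ℝ)
    (μ : S → Measure (ℕ → S)) (s : S) : ℝ :=
  ∫ ω, Ret Acc γacc γ rn ω ∂ (μ s)

variable {A : S → Type*}

noncomputable def Valp [MeasurableSpace S] (Acc : Set S) (γacc γ rn : ℝ)
    (μ : ((s : S) → A s) → S → Measure (ℕ → S)) (π : (s : S) → A s) (s : S) : ℝ :=
  ∫ ω, Ret Acc γacc γ rn ω ∂ (μ π s)

noncomputable def Qp [MeasurableSpace S] [Fintype S]
    (P : (s : S) → A s → PMF S) (Acc : Set S) (γacc γ rn : ℝ)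
    (μ : ((s : S) → A s) → S → Measure (ℕ → S)) (π : (s : S) → A s) (s : S) (a : A s) : ℝ :=
  ∑ s' : S, (P s a s').toReal *
    (Rw Acc γacc rn s' + Γw Acc γacc γ s' * Valp Acc γacc γ rn μ π s')

noncomputable def Qstar [MeasurableSpace S] [Fintype S]
    (P : (s : S) → A s → PMF S) (Acc : Set S) (γacc γ rn : ℝ)
    (μ : ((s : S) → A s) → S → Measure (ℕ → S)) (s : S) (a : A s) : ℝ :=
  ⨆ π : (s' : S) → A s', Qp P Acc γacc γ rn μ π s a

def WinRegion [MeasurableSpace S] (Acc : Set S)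
    (μ : ((s : S) → A s) → S → Measure (ℕ → S)) : Set S :=
  {s | ∃ π : (s' : S) → A s', μ π s {ω | ∀ t, ω t ∉ Acc} = 1}

def IsOptimal [MeasurableSpace S] (Acc : Set S) (γacc γ rn : ℝ)
    (μ : ((s : S) → A s) → S → Measure (ℕ → S)) (πo : (s : S) → A s) : Prop :=
  ∀ s, Valp Acc γacc γ rn μ πo s = ⨆ π : (s' : S) → A s', Valp Acc γacc γ rn μ π s

set_option linter.unusedSectionVars false

namespace SafetyAux

variable {S : Type*}


lemma summable_ret (Acc : Set S) {γacc γ : ℝ} (rn : ℝ) (h1 : 0 < γacc) (h2 : γacc < 1)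
    (h3 : 0 < γ) (h4 : γ < 1) (ω : ℕ → S) :
    Summable (fun t => Rw Acc γacc rn (ω (t + 1)) *
      ∏ k ∈ Finset.range t, Γw Acc γacc γ (ω (k + 1))) := by
  set ρ := max γacc γ with hρ
  have hρ0 : 0 ≤ ρ := le_max_of_le_left h1.le
  have hρ1 : ρ < 1 := max_lt h2 h4
  apply Summable.of_norm_bounded (g := fun t => ((1 - γacc) * |rn|) * ρ ^ t)
    ((summable_geometric_of_lt_one hρ0 hρ1).mul_left _)
  intro t
  rw [norm_mul]
  apply mul_le_mul
  · show ‖Rw Acc γacc rn (ω (t+1))‖ ≤ (1 - γacc) * |rn|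
    unfold Rw
    split
    · rw [Real.norm_eq_abs, abs_mul, abs_of_nonneg (by linarith : (0:ℝ) ≤ 1 - γacc)]
    · simp only [norm_zero]
      exact mul_nonneg (by linarith) (abs_nonneg _)
  · show ‖∏ k ∈ Finset.range t, Γw Acc γacc γ (ω (k+1))‖ ≤ ρ ^ t
    rw [Real.norm_eq_abs, Finset.abs_prod]
    calc ∏ k ∈ Finset.range t, |Γw Acc γacc γ (ω (k+1))|
        ≤ ∏ _k ∈ Finset.range t, ρ := by
          apply Finset.prod_le_prod (fun _ _ => abs_nonneg _)
          intro k _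
          unfold Γw
          split
          · rw [abs_of_nonneg h1.le]; exact le_max_left _ _
          · rw [abs_of_nonneg h3.le]; exact le_max_right _ _
      _ = ρ ^ t := by rw [Finset.prod_const, Finset.card_range]
  · exact norm_nonneg _
  · exact mul_nonneg (by linarith) (abs_nonneg _)

lemma ret_eq_zero (Acc : Set S) (γacc γ rn : ℝ) {ω : ℕ → S}
    (h : ∀ t, ω (t + 1) ∉ Acc) : Ret Acc γacc γ rn ω = 0 := by
  unfold Ret
  have : ∀ t : ℕ, Rw Acc γacc rn (ω (t + 1)) *
      ∏ k ∈ Finset.range t, Γw Acc γacc γ (ω (k + 1)) = 0 := by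
    intro t
    rw [Rw, if_neg (h t), zero_mul]
  rw [tsum_congr this, tsum_zero]

lemma ret_eq_of_good (Acc : Set S) {γacc γ : ℝ} (rn : ℝ) (h1 : 0 < γacc) (h2 : γacc < 1)
    (h3 : 0 < γ) (h4 : γ < 1) {ω : ℕ → S}
    (hg : ∀ t, ω t ∈ Acc → ω (t + 1) ∈ Acc) (h : ∃ t, ω (t + 1) ∈ Acc) :
    Ret Acc γacc γ rn ω = rn * γ ^ (Nat.find h) := by
  set T := Nat.find h with hTdef
  have hT : ω (T + 1) ∈ Acc := Nat.find_spec h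
  have hlt : ∀ k < T, ω (k + 1) ∉ Acc := fun k hk => Nat.find_min h hk
  have habs2 : ∀ j, ω (T + j + 1) ∈ Acc := by
    intro j
    induction j with
    | zero => simpa using hT
    | succ n ih =>
        have h' := hg (T + n + 1) ih
        have : T + (n + 1) + 1 = T + n + 1 + 1 := by ring
        rw [this]; exact h'
  have hsum := summable_ret Acc rn h1 h2 h3 h4 ω
  unfold Ret
  rw [← Summable.sum_add_tsum_nat_add T hsum]
  have hzero : ∑ i ∈ Finset.range T, (Rw Acc γacc rn (ω (i + 1)) *
      ∏ k ∈ Finset.range i, Γw Acc γacc γ (ω (k + 1))) = 0 := by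
    apply Finset.sum_eq_zero
    intro i hi
    rw [Rw, if_neg (hlt i (Finset.mem_range.mp hi)), zero_mul]
  rw [hzero, zero_add]
  have key : ∀ i : ℕ, Rw Acc γacc rn (ω (i + T + 1)) *
      ∏ k ∈ Finset.range (i + T), Γw Acc γacc γ (ω (k + 1)) =
      ((1 - γacc) * rn * γ ^ T) * γacc ^ i := by
    intro i
    have e1 : Rw Acc γacc rn (ω (i + T + 1)) = (1 - γacc) * rn := by
      rw [Rw, if_pos]
      have : i + T + 1 = T + i + 1 := by ring
      rw [this]; exact habs2 i
    have e2 : ∏ k ∈ Finset.range (i + T), Γw Acc γacc γ (ω (k + 1)) = γ ^ T * γacc ^ i := by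
      have : i + T = T + i := by ring
      rw [this, Finset.prod_range_add]
      congr 1
      · calc ∏ k ∈ Finset.range T, Γw Acc γacc γ (ω (k + 1))
            = ∏ _k ∈ Finset.range T, γ := by
              apply Finset.prod_congr rfl
              intro k hk
              rw [Γw, if_neg (hlt k (Finset.mem_range.mp hk))]
          _ = γ ^ T := by rw [Finset.prod_const, Finset.card_range]
      · calc ∏ k ∈ Finset.range i, Γw Acc γacc γ (ω (T + k + 1))
            = ∏ _k ∈ Finset.range i, γacc := by
              apply Finset.prod_congr rfl
              intro k _
              rw [Γw, if_pos (habs2 k)]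
          _ = γacc ^ i := by rw [Finset.prod_const, Finset.card_range]
    rw [e1, e2]; ring
  rw [tsum_congr key, tsum_mul_left, tsum_geometric_of_lt_one h1.le h2]
  have : (1 : ℝ) - γacc ≠ 0 := by linarith
  field_simp



section Meas
variable [Fintype S] [MeasurableSpace S] [MeasurableSingletonClass S]

lemma measSet (B : Set S) : MeasurableSet B := (Set.toFinite B).measurableSet

/-- extension of a finite vector to an infinite sequence -/
def extSeq (n : ℕ) (v : Fin (n + 1) → S) : ℕ → S :=
  fun i => if h : i < n + 1 then v ⟨i, h⟩ else v ⟨0, Nat.succ_pos n⟩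

lemma extSeq_eq (n : ℕ) (v : Fin (n + 1) → S) (i : ℕ) (h : i < n + 1) :
    extSeq n v i = v ⟨i, h⟩ := dif_pos h

lemma bad_null (p : S → PMF S) (Acc : Set S)
    (habs : ∀ s ∈ Acc, (p s).support ⊆ Acc)
    (ν : S → Measure (ℕ → S)) (hν : IsPathMeasure p ν) (s : S) :
    ν s {ω | ∃ t, ω t ∈ Acc ∧ ω (t + 1) ∉ Acc} = 0 := by
  apply measure_mono_null (t := ⋃ (t : ℕ), ⋃ (v : Fin (t + 2) → S),
    {ω : ℕ → S | (v ⟨t, by omega⟩ ∈ Acc ∧ v ⟨t + 1, by omega⟩ ∉ Acc) ∧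
      ∀ i ≤ t + 1, ω i = extSeq (t + 1) v i})
  · intro ω hω
    obtain ⟨t, ht1, ht2⟩ := hω
    simp only [mem_iUnion]
    refine ⟨t, fun i => ω i, ⟨⟨ht1, ht2⟩, ?_⟩⟩
    intro i hi
    rw [extSeq_eq _ _ i (by omega)]
  · apply measure_iUnion_null
    intro t
    apply measure_iUnion_null
    intro v
    by_cases hc : v ⟨t, by omega⟩ ∈ Acc ∧ v ⟨t + 1, by omega⟩ ∉ Acc
    · have hset : {ω : ℕ → S | (v ⟨t, by omega⟩ ∈ Acc ∧ v ⟨t + 1, by omega⟩ ∉ Acc) ∧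
          ∀ i ≤ t + 1, ω i = extSeq (t + 1) v i} =
          {ω : ℕ → S | ∀ i ≤ t + 1, ω i = extSeq (t + 1) v i} := by
        ext ω; simp [hc]
      rw [hset, hν.2 s (t + 1) (extSeq (t + 1) v)]
      have hfac : (p (extSeq (t + 1) v t)) (extSeq (t + 1) v (t + 1)) = 0 := by
        rw [extSeq_eq _ _ t (by omega), extSeq_eq _ _ (t + 1) (by omega)]
        by_contra hne
        exact hc.2 (habs _ hc.1 (PMF.mem_support_iff _ _ |>.2 hne))
      rw [Finset.prod_eq_zero (Finset.mem_range.mpr (Nat.lt_succ_self t)) hfac, mul_zero]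
    · have hset : {ω : ℕ → S | (v ⟨t, by omega⟩ ∈ Acc ∧ v ⟨t + 1, by omega⟩ ∉ Acc) ∧
          ∀ i ≤ t + 1, ω i = extSeq (t + 1) v i} = ∅ := by
        ext ω; simp only [mem_setOf_eq, mem_empty_iff_false, iff_false]
        intro hcon; exact hc hcon.1
      rw [hset, measure_empty]

lemma ae_good (p : S → PMF S) (Acc : Set S)
    (habs : ∀ s ∈ Acc, (p s).support ⊆ Acc)
    (ν : S → Measure (ℕ → S)) (hν : IsPathMeasure p ν) (s : S) :
    ∀ᵐ ω ∂(ν s), ∀ t, ω t ∈ Acc → ω (t + 1) ∈ Acc := by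
  rw [ae_iff]
  have : {ω : ℕ → S | ¬∀ t, ω t ∈ Acc → ω (t + 1) ∈ Acc} =
      {ω : ℕ → S | ∃ t, ω t ∈ Acc ∧ ω (t + 1) ∉ Acc} := by
    ext ω; push_neg; rfl
  rw [this]
  exact bad_null p Acc habs ν hν s

lemma start_state (p : S → PMF S) (ν : S → Measure (ℕ → S))
    (hν : IsPathMeasure p ν) (s : S) : ν s {ω : ℕ → S | ω 0 = s} = 1 := by
  have h := hν.2 s 0 (fun _ => s)
  have hset : {ω : ℕ → S | ∀ i ≤ 0, ω i = s} = {ω : ℕ → S | ω 0 = s} := by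
    ext ω
    simp [Nat.le_zero]
  rw [hset] at h
  simpa using h

lemma start_ne_null (p : S → PMF S) (ν : S → Measure (ℕ → S))
    (hν : IsPathMeasure p ν) (s : S) : ν s {ω : ℕ → S | ω 0 ≠ s} = 0 := by
  haveI := hν.1 s
  have hm : MeasurableSet {ω : ℕ → S | ω 0 = s} := by
    have : {ω : ℕ → S | ω 0 = s} = (fun ω : ℕ → S => ω 0) ⁻¹' {s} := rfl
    rw [this]
    exact (measurable_pi_apply 0) (measSet {s})
  have : {ω : ℕ → S | ω 0 ≠ s} = {ω : ℕ → S | ω 0 = s}ᶜ := rfl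
  rw [this, measure_compl hm (measure_ne_top _ _), start_state p ν hν s,
    measure_univ, tsub_self]

end Meas



section Meas
variable [Fintype S] [MeasurableSpace S] [MeasurableSingletonClass S]

def HitBy (Acc : Set S) (n : ℕ) : Set (ℕ → S) := {ω | ∃ t < n, ω (t + 1) ∈ Acc}

def Hits (Acc : Set S) : Set (ℕ → S) := {ω | ∃ t, ω (t + 1) ∈ Acc}

lemma measurableSet_hitBy (Acc : Set S) (n : ℕ) : MeasurableSet (HitBy Acc n) := by
  have : HitBy Acc n = ⋃ t, ⋃ (_ : t < n), (fun ω : ℕ → S => ω (t + 1)) ⁻¹' Acc := by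
    ext ω; simp [HitBy]
  rw [this]
  exact .iUnion fun t => .iUnion fun _ => (measurable_pi_apply _) (measSet Acc)

lemma measurableSet_hits (Acc : Set S) : MeasurableSet (Hits Acc) := by
  have : Hits Acc = ⋃ t, (fun ω : ℕ → S => ω (t + 1)) ⁻¹' Acc := by
    ext ω; simp [Hits]
  rw [this]
  exact .iUnion fun t => (measurable_pi_apply _) (measSet Acc)

lemma measurableSet_safe (Acc : Set S) : MeasurableSet {ω : ℕ → S | ∀ t, ω t ∉ Acc} := by
  have : {ω : ℕ → S | ∀ t, ω t ∉ Acc} = ⋂ t, (fun ω : ℕ → S => ω t) ⁻¹' Accᶜ := by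
    ext ω; simp
  rw [this]
  exact .iInter fun t => (measurable_pi_apply _) (measSet _)

lemma hitBy_union (Acc : Set S) : ⋃ n, HitBy Acc n = Hits Acc := by
  ext ω
  simp only [HitBy, Hits, mem_iUnion, mem_setOf_eq]
  constructor
  · rintro ⟨n, t, _, ht⟩; exact ⟨t, ht⟩
  · rintro ⟨t, ht⟩; exact ⟨t + 1, t, Nat.lt_succ_self t, ht⟩

lemma measurable_ret (Acc : Set S) {γacc γ : ℝ} (rn : ℝ) (h1 : 0 < γacc) (h2 : γacc < 1)
    (h3 : 0 < γ) (h4 : γ < 1) : Measurable (Ret Acc γacc γ rn) := by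
  apply measurable_of_tendsto_metrizable
    (f := fun n ω => ∑ t ∈ Finset.range n, Rw Acc γacc rn (ω (t + 1)) *
      ∏ k ∈ Finset.range t, Γw Acc γacc γ (ω (k + 1)))
  · intro n
    exact Finset.measurable_sum _ (fun t _ =>
      ((measurable_of_countable _).comp' (measurable_pi_apply (t + 1))).mul
        (Finset.measurable_prod _ (fun k _ =>
          (measurable_of_countable _).comp' (measurable_pi_apply (k + 1)))))
  · rw [tendsto_pi_nhds]
    intro ω
    exact (summable_ret Acc rn h1 h2 h3 h4 ω).hasSum.tendsto_sum_nat

end Meas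


section Meas
variable [Fintype S] [MeasurableSpace S] [MeasurableSingletonClass S]

lemma integrable_ret (Acc : Set S) {γacc γ rn : ℝ} (h1 : 0 < γacc) (h2 : γacc < 1)
    (h3 : 0 < γ) (h4 : γ < 1)
    (ν : Measure (ℕ → S)) [IsProbabilityMeasure ν]
    (hgood : ∀ᵐ ω ∂ν, ∀ t, ω t ∈ Acc → ω (t + 1) ∈ Acc) :
    Integrable (Ret Acc γacc γ rn) ν := by
  apply Integrable.mono' (integrable_const |rn|)
    ((measurable_ret Acc rn h1 h2 h3 h4).aestronglyMeasurable)
  filter_upwards [hgood] with ω hg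
  by_cases h : ∃ t, ω (t + 1) ∈ Acc
  · rw [ret_eq_of_good Acc rn h1 h2 h3 h4 hg h, Real.norm_eq_abs, abs_mul, abs_pow]
    calc |rn| * |γ| ^ (Nat.find h) ≤ |rn| * 1 := by
          apply mul_le_mul_of_nonneg_left _ (abs_nonneg rn)
          exact pow_le_one₀ (abs_nonneg γ) (by rw [abs_of_pos h3]; exact h4.le)
      _ = |rn| := mul_one _
  · push_neg at h
    rw [ret_eq_zero Acc γacc γ rn h]
    simp

lemma integral_ret_le (Acc : Set S) {γacc γ rn : ℝ} (h1 : 0 < γacc) (h2 : γacc < 1)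
    (h3 : 0 < γ) (h4 : γ < 1) (hrn : rn < 0)
    (ν : Measure (ℕ → S)) [IsProbabilityMeasure ν]
    (hgood : ∀ᵐ ω ∂ν, ∀ t, ω t ∈ Acc → ω (t + 1) ∈ Acc) (n : ℕ) :
    ∫ ω, Ret Acc γacc γ rn ω ∂ν ≤ rn * γ ^ n * (ν (HitBy Acc n)).toReal := by
  have hle : ∀ᵐ ω ∂ν, Ret Acc γacc γ rn ω ≤
      (HitBy Acc n).indicator (fun _ => rn * γ ^ n) ω := by
    filter_upwards [hgood] with ω hg
    by_cases h : ∃ t, ω (t + 1) ∈ Acc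
    · rw [ret_eq_of_good Acc rn h1 h2 h3 h4 hg h]
      by_cases hT : Nat.find h < n
      · have hmem : ω ∈ HitBy Acc n := ⟨Nat.find h, hT, Nat.find_spec h⟩
        rw [indicator_of_mem hmem]
        exact mul_le_mul_of_nonpos_left
          (pow_le_pow_of_le_one h3.le h4.le hT.le) hrn.le
      · have hnot : ω ∉ HitBy Acc n := by
          rintro ⟨t, htn, hta⟩
          exact hT (lt_of_le_of_lt (Nat.find_le hta) htn)
        rw [indicator_of_notMem hnot]
        exact mul_nonpos_of_nonpos_of_nonneg hrn.le (pow_nonneg h3.le _)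
    · push_neg at h
      rw [ret_eq_zero Acc γacc γ rn h]
      have hnot : ω ∉ HitBy Acc n := by
        rintro ⟨t, _, hta⟩; exact h t hta
      rw [indicator_of_notMem hnot]
  calc ∫ ω, Ret Acc γacc γ rn ω ∂ν
      ≤ ∫ ω, (HitBy Acc n).indicator (fun _ => rn * γ ^ n) ω ∂ν :=
        integral_mono_ae (integrable_ret Acc h1 h2 h3 h4 ν hgood)
          ((integrable_const _).indicator (measurableSet_hitBy Acc n)) hle
    _ = (ν (HitBy Acc n)).toReal • (rn * γ ^ n) :=
        integral_indicator_const _ (measurableSet_hitBy Acc n)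
    _ = rn * γ ^ n * (ν (HitBy Acc n)).toReal := by rw [smul_eq_mul]; ring

lemma integral_ret_ge (Acc : Set S) {γacc γ rn : ℝ} (h1 : 0 < γacc) (h2 : γacc < 1)
    (h3 : 0 < γ) (h4 : γ < 1) (hrn : rn < 0)
    (ν : Measure (ℕ → S)) [IsProbabilityMeasure ν]
    (hgood : ∀ᵐ ω ∂ν, ∀ t, ω t ∈ Acc → ω (t + 1) ∈ Acc) :
    rn * (ν (Hits Acc)).toReal ≤ ∫ ω, Ret Acc γacc γ rn ω ∂ν := by
  have hle : ∀ᵐ ω ∂ν, (Hits Acc).indicator (fun _ => rn) ω ≤ Ret Acc γacc γ rn ω := by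
    filter_upwards [hgood] with ω hg
    by_cases h : ∃ t, ω (t + 1) ∈ Acc
    · rw [ret_eq_of_good Acc rn h1 h2 h3 h4 hg h,
        indicator_of_mem (show ω ∈ Hits Acc from h)]
      have h5 : γ ^ (Nat.find h) ≤ 1 := pow_le_one₀ h3.le h4.le
      nlinarith
    · push_neg at h
      rw [ret_eq_zero Acc γacc γ rn h, indicator_of_notMem (show ω ∉ Hits Acc from fun ⟨t, ht⟩ => h t ht)]
  calc rn * (ν (Hits Acc)).toReal
      = (ν (Hits Acc)).toReal • rn := by rw [smul_eq_mul]; ring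
    _ = ∫ ω, (Hits Acc).indicator (fun _ => rn) ω ∂ν :=
        (integral_indicator_const _ (measurableSet_hits Acc)).symm
    _ ≤ ∫ ω, Ret Acc γacc γ rn ω ∂ν :=
        integral_mono_ae ((integrable_const _).indicator (measurableSet_hits Acc))
          (integrable_ret Acc h1 h2 h3 h4 ν hgood) hle

end Meas

end SafetyAux

/-- for `γ` close enough to 1, every optimal policy attains the maximum
probability of satisfying the safety condition at every state. -/
theorem optimal_policy_attains_max_safety_prob
    [Fintype S] [Nonempty S] [MeasurableSpace S] [MeasurableSingletonClass S]
    [∀ s, Fintype (A s)] [∀ s, Nonempty (A s)]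
    (P : (s : S) → A s → PMF S) (Acc : Set S)
    (habs : ∀ s ∈ Acc, ∀ a : A s, (P s a).support ⊆ Acc)
    (μ : ((s : S) → A s) → S → Measure (ℕ → S))
    (hμ : ∀ π : (s : S) → A s, IsPathMeasure (fun s => P s (π s)) (μ π))
    (rn γacc : ℝ) (hrn : rn < 0) (hγacc : 0 < γacc ∧ γacc < 1) :
    ∃ γ' : ℝ, 0 < γ' ∧ γ' < 1 ∧ ∀ γ : ℝ, γ' < γ → γ < 1 →
      ∀ πo : (s : S) → A s, IsOptimal Acc γacc γ rn μ πo →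
        ∀ s : S, μ πo s {ω | ∀ t, ω t ∉ Acc} =
          ⨆ π : (s' : S) → A s', μ π s {ω | ∀ t, ω t ∉ Acc} := by
  classical
  obtain ⟨hacc0, hacc1⟩ := hγacc
  set Safe : Set (ℕ → S) := {ω : ℕ → S | ∀ t, ω t ∉ Acc} with hSafe
  haveI hprob : ∀ (π : (s : S) → A s) (s : S), IsProbabilityMeasure (μ π s) :=
    fun π s => (hμ π).1 s
  set p : ((s : S) → A s) → S → ℝ := fun π s => (μ π s Safe).toReal with hp
  have hple : ∀ (π : (s : S) → A s) (s : S), p π s ≤ 1 := by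
    intro π s
    have := ENNReal.toReal_mono ENNReal.one_ne_top (prob_le_one (μ := μ π s) (s := Safe))
    simpa using this
  have hpnonneg : ∀ (π : (s : S) → A s) (s : S), 0 ≤ p π s := fun π s => ENNReal.toReal_nonneg
  have hpacc : ∀ (π : (s : S) → A s), ∀ s ∈ Acc, p π s = 0 := by
    intro π s hs
    have h0 : μ π s Safe = 0 := by
      apply measure_mono_null _ (SafetyAux.start_ne_null _ _ (hμ π) s)
      intro ω hω hcon
      exact hω 0 (hcon ▸ hs)
    simp only [hp, h0, ENNReal.toReal_zero]
  have hkey1 : ∀ (π : (s : S) → A s) (s : S),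
      (μ π s (SafetyAux.Hits Acc)).toReal ≤ 1 - p π s := by
    intro π s
    have hdisj : Disjoint Safe (SafetyAux.Hits Acc) := by
      rw [Set.disjoint_left]
      rintro ω hω ⟨t, ht⟩
      exact hω (t + 1) ht
    have hsum : μ π s Safe + μ π s (SafetyAux.Hits Acc) ≤ 1 := by
      rw [← measure_union hdisj (SafetyAux.measurableSet_hits Acc)]
      exact prob_le_one
    have h2 := ENNReal.toReal_mono ENNReal.one_ne_top hsum
    rw [ENNReal.toReal_add (measure_ne_top _ _) (measure_ne_top _ _)] at h2
    simp only [ENNReal.toReal_one] at h2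
    linarith
  have hkey2 : ∀ (π : (s : S) → A s) (s : S), s ∉ Acc →
      1 - p π s ≤ (μ π s (SafetyAux.Hits Acc)).toReal := by
    intro π s hs
    have hsub : Safeᶜ ⊆ {ω : ℕ → S | ω 0 ≠ s} ∪ SafetyAux.Hits Acc := by
      intro ω hω
      simp only [hSafe, mem_compl_iff, mem_setOf_eq, not_forall, not_not] at hω
      obtain ⟨t, ht⟩ := hω
      cases t with
      | zero => exact Or.inl (fun h0 => hs (h0 ▸ ht))
      | succ k => exact Or.inr ⟨k, ht⟩
    have h1 : μ π s Safeᶜ ≤ μ π s (SafetyAux.Hits Acc) := by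
      calc μ π s Safeᶜ ≤ μ π s {ω : ℕ → S | ω 0 ≠ s} + μ π s (SafetyAux.Hits Acc) :=
            le_trans (measure_mono hsub) (measure_union_le _ _)
        _ = μ π s (SafetyAux.Hits Acc) := by
            rw [SafetyAux.start_ne_null _ _ (hμ π) s, zero_add]
    have hcompl : μ π s Safeᶜ = 1 - μ π s Safe := by
      rw [measure_compl (SafetyAux.measurableSet_safe Acc) (measure_ne_top _ _), measure_univ]
    rw [hcompl] at h1
    have h2 := ENNReal.toReal_mono (measure_ne_top _ _) h1
    rw [ENNReal.toReal_sub_of_le prob_le_one ENNReal.one_ne_top] at h2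
    simpa using h2
  -- the per-pair claim
  have claim : ∀ (π : (s' : S) → A s') (s : S), ∃ g : ℝ, 1/2 ≤ g ∧ g < 1 ∧
      ∀ γ : ℝ, g < γ → γ < 1 → (∃ π', p π s < p π' s) →
        ∃ π', Valp Acc γacc γ rn μ π s < Valp Acc γacc γ rn μ π' s := by
    intro π s
    by_cases hsub : ∃ π', p π s < p π' s
    swap
    · exact ⟨1/2, le_refl _, by norm_num, fun γ _ _ h => absurd h hsub⟩
    obtain ⟨π₁, hπ₁⟩ := Finite.exists_max (fun π' : (s' : S) → A s' => p π' s)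
    have hMgt : p π s < p π₁ s := lt_of_lt_of_le hsub.choose_spec (hπ₁ _)
    have hsAcc : s ∉ Acc := by
      intro hs
      rw [hpacc π s hs, hpacc π₁ s hs] at hMgt
      exact lt_irrefl _ hMgt
    set M := p π₁ s with hM
    set m := 1 - M with hm
    have hm0 : 0 ≤ m := by have := hple π₁ s; simp only [hm]; linarith
    have hgt : m < (μ π s (SafetyAux.Hits Acc)).toReal := by
      have := hkey2 π s hsAcc
      simp only [hm, hM]
      linarith
    have hmono : Monotone (fun n => SafetyAux.HitBy Acc n) := by
      intro a b hab ω hω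
      obtain ⟨t, htl, hta⟩ := hω
      exact ⟨t, lt_of_lt_of_le htl hab, hta⟩
    have hconv0 := tendsto_measure_iUnion_atTop (μ := μ π s) hmono
    rw [SafetyAux.hitBy_union] at hconv0
    have hconv : Filter.Tendsto (fun n => (μ π s (SafetyAux.HitBy Acc n)).toReal)
        Filter.atTop (nhds ((μ π s (SafetyAux.Hits Acc)).toReal)) :=
      (ENNReal.tendsto_toReal (measure_ne_top _ _)).comp hconv0
    obtain ⟨N, hN⟩ := (hconv.eventually (eventually_gt_nhds hgt)).exists
    set u := (μ π s (SafetyAux.HitBy Acc N)).toReal with hu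
    have hu0 : 0 < u := lt_of_le_of_lt hm0 hN
    refine ⟨max (1 - (u - m) / (N * u + 1)) (1/2), le_max_right _ _, ?_, ?_⟩
    · apply max_lt _ (by norm_num)
      have : 0 < (u - m) / ((N : ℝ) * u + 1) := div_pos (by linarith) (by positivity)
      linarith
    intro γ hγg hγ1 _
    have hγhalf : (1:ℝ)/2 < γ := lt_of_le_of_lt (le_max_right _ _) hγg
    have hγ0 : 0 < γ := by linarith
    have hbern : 1 + (N : ℝ) * (γ - 1) ≤ γ ^ N := by
      have := one_add_mul_le_pow (a := γ - 1) (by linarith) N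
      simpa using this
    have hγg2 : 1 - (u - m) / ((N : ℝ) * u + 1) < γ := lt_of_le_of_lt (le_max_left _ _) hγg
    have hden : (0:ℝ) < (N : ℝ) * u + 1 := by positivity
    have hnum : m < γ ^ N * u := by
      have h5 : (1 - γ) * ((N : ℝ) * u + 1) < u - m := by
        have h6 : 1 - γ < (u - m) / ((N : ℝ) * u + 1) := by linarith
        calc (1 - γ) * ((N : ℝ) * u + 1)
            < ((u - m) / ((N : ℝ) * u + 1)) * ((N : ℝ) * u + 1) := by
              apply mul_lt_mul_of_pos_right h6 hden
          _ = u - m := by field_simp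
      nlinarith [hbern, hu0, hm0, mul_le_mul_of_nonneg_right hbern hu0.le]
    have hgood1 := SafetyAux.ae_good _ Acc (fun s' hs' => habs s' hs' (π s')) _ (hμ π) s
    have hgood2 := SafetyAux.ae_good _ Acc (fun s' hs' => habs s' hs' (π₁ s')) _ (hμ π₁) s
    have hVle : Valp Acc γacc γ rn μ π s ≤ rn * γ ^ N * u :=
      SafetyAux.integral_ret_le Acc hacc0 hacc1 hγ0 hγ1 hrn (μ π s) hgood1 N
    have hVge : rn * m ≤ Valp Acc γacc γ rn μ π₁ s := by
      have hg1 := SafetyAux.integral_ret_ge Acc hacc0 hacc1 hγ0 hγ1 hrn (μ π₁ s) hgood2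
      have h7 : rn * m ≤ rn * (μ π₁ s (SafetyAux.Hits Acc)).toReal := by
        apply mul_le_mul_of_nonpos_left _ hrn.le
        have := hkey1 π₁ s
        simp only [hm, hM]
        linarith
      exact le_trans h7 hg1
    refine ⟨π₁, ?_⟩
    have hfin : rn * γ ^ N * u < rn * m := by
      have := mul_lt_mul_of_neg_left hnum hrn
      calc rn * γ ^ N * u = rn * (γ ^ N * u) := by ring
        _ < rn * m := this
    linarith
  choose g hg1 hg2 hg3 using claim
  obtain ⟨q0, hq0⟩ := Finite.exists_max (fun q : ((s' : S) → A s') × S => g q.1 q.2)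
  refine ⟨g q0.1 q0.2, by linarith [hg1 q0.1 q0.2], hg2 q0.1 q0.2, ?_⟩
  intro γ hγg hγ1 πo hopt s
  obtain ⟨π₁, hπ₁⟩ := Finite.exists_max (fun π' : (s' : S) → A s' => p π' s)
  have hpeq : p πo s = p π₁ s := by
    by_contra hne
    have hlt : p πo s < p π₁ s := lt_of_le_of_ne (hπ₁ πo) hne
    have hγg' : g πo s < γ := lt_of_le_of_lt (hq0 (πo, s)) hγg
    obtain ⟨π', hπ'⟩ := hg3 πo s γ hγg' hγ1 ⟨π₁, hlt⟩
    have hle : Valp Acc γacc γ rn μ π' s ≤ Valp Acc γacc γ rn μ πo s := by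
      rw [hopt s]
      exact le_ciSup (f := fun π : (s' : S) → A s' => Valp Acc γacc γ rn μ π s)
        (Set.Finite.bddAbove (Set.finite_range _)) π'
    linarith
  apply le_antisymm
  · exact le_iSup (fun π : (s' : S) → A s' => μ π s Safe) πo
  · apply iSup_le
    intro π
    have h8 : p π s ≤ p πo s := hpeq ▸ hπ₁ π
    exact (ENNReal.toReal_le_toReal (measure_ne_top _ _) (measure_ne_top _ _)).1 h8
end

section
/- For every optimal policy π* and every state s ∈ S: (i) μ^{π*}_s(Safe ∩ {ω : ∃ t, ω t ∈ W}) = μ^{π*}_s({ω : ∃ t, ω t ∈ W}), and (ii) μ^{π*}_s(Safe ∩ {ω : ∀ t, ω t ∉ W}) = 0, where W is the winning region. -/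
open MeasureTheory Set
open scoped ENNReal Classical

variable {S : Type*}

variable {A : S → Type*}

section Aux
variable [MeasurableSpace S] [MeasurableSingletonClass S] [Fintype S]

def Cyl (x : ℕ → S) (n : ℕ) : Set (ℕ → S) := {ω | ∀ i ≤ n, ω i = x i}

lemma measurableSet_cyl (x : ℕ → S) (n : ℕ) : MeasurableSet (Cyl x n) := by
  have : Cyl x n = ⋂ i ∈ Finset.range (n+1), (fun ω : ℕ → S => ω i) ⁻¹' {x i} := by
    ext ω
    simp [Cyl, Nat.lt_succ_iff]
  rw [this]
  exact MeasurableSet.biInter (Finset.range (n+1)).countable_toSet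
    (fun i _ => (measurable_pi_apply i) (MeasurableSet.of_discrete))

/-- extension of a finite tuple to `ℕ → S` -/
def extv (n : ℕ) (v : Fin (n+1) → S) : ℕ → S :=
  fun j => v ⟨min j n, Nat.lt_succ_of_le (min_le_right _ _)⟩

lemma extv_eq (n : ℕ) (v : Fin (n+1) → S) {i : ℕ} (h : i ≤ n) :
    extv n v i = v ⟨i, Nat.lt_succ_of_le h⟩ := by
  simp only [extv]
  congr 1
  exact Fin.ext (by simp [Nat.min_eq_left h])

/-- decomposition of a prefix-determined set into cylinders -/
lemma prefix_eq_iUnion_cyl (Q : ℕ → S → Prop) (n : ℕ) :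
    {ω : ℕ → S | ∀ i ≤ n, Q i (ω i)} =
      ⋃ (v : Fin (n+1) → S) (_ : ∀ i : Fin (n+1), Q i (v i)), Cyl (extv n v) n := by
  ext ω
  constructor
  · intro hω
    refine mem_iUnion.2 ⟨fun i => ω i, mem_iUnion.2 ⟨fun i => hω i (Nat.lt_succ_iff.mp i.2), ?_⟩⟩
    intro i hi
    rw [extv_eq n _ hi]
  · rintro hmem
    simp only [mem_iUnion] at hmem
    obtain ⟨v, hv, hω⟩ := hmem
    intro i hi
    have := hω i hi
    rw [extv_eq n v hi] at this
    rw [this]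
    exact hv ⟨i, Nat.lt_succ_of_le hi⟩

lemma eval_mem_generateFrom (i : ℕ) (a : S) :
    MeasurableSet[MeasurableSpace.generateFrom {C : Set (ℕ → S) | ∃ x n, C = Cyl x n}]
      {ω : ℕ → S | ω i = a} := by
  have : {ω : ℕ → S | ω i = a} = {ω : ℕ → S | ∀ j ≤ i, (fun (j : ℕ) (c : S) => j = i → c = a) j (ω j)} := by
    ext ω; simp only [mem_setOf_eq]
    exact ⟨fun h j _ hj => hj ▸ h, fun h => h i le_rfl rfl⟩
  have h2 := prefix_eq_iUnion_cyl (S := S) (fun j c => j = i → c = a) i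
  rw [this, h2]
  refine MeasurableSet.iUnion fun v => MeasurableSet.iUnion fun _ =>
    MeasurableSpace.measurableSet_generateFrom ⟨_, _, rfl⟩

lemma pi_eq_generateFrom_cyl :
    (MeasurableSpace.pi : MeasurableSpace (ℕ → S)) =
      MeasurableSpace.generateFrom {C : Set (ℕ → S) | ∃ x n, C = Cyl x n} := by
  refine le_antisymm ?_ (MeasurableSpace.generateFrom_le ?_)
  · have hle : ∀ i : ℕ, (inferInstance : MeasurableSpace S).comap (fun ω : ℕ → S => ω i) ≤
        MeasurableSpace.generateFrom {C : Set (ℕ → S) | ∃ x n, C = Cyl x n} := by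
      intro i
      rw [← measurable_iff_comap_le]
      intro t ht
      have : (fun ω : ℕ → S => ω i) ⁻¹' t = ⋃ a ∈ t, {ω : ℕ → S | ω i = a} := by
        ext ω; simp
      rw [this]
      exact MeasurableSet.biUnion t.to_countable fun a _ => eval_mem_generateFrom i a
    exact iSup_le hle
  · rintro C ⟨x, n, rfl⟩
    exact measurableSet_cyl x n

lemma isPiSystem_cyl :
    IsPiSystem {C : Set (ℕ → S) | ∃ (x : ℕ → S) (n : ℕ), C = Cyl x n} := by
  rintro C1 ⟨x, n, rfl⟩ C2 ⟨y, m, rfl⟩ hne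
  obtain ⟨ω, hω1, hω2⟩ := hne
  rcases le_total n m with hnm | hnm
  · refine ⟨y, m, ?_⟩
    apply Set.eq_of_subset_of_subset inter_subset_right
    intro ψ hψ
    refine ⟨fun i hi => ?_, hψ⟩
    rw [hψ i (hi.trans hnm), ← hω2 i (hi.trans hnm), hω1 i hi]
  · refine ⟨x, n, ?_⟩
    apply Set.eq_of_subset_of_subset inter_subset_left
    intro ψ hψ
    refine ⟨hψ, fun i hi => ?_⟩
    rw [hψ i (hi.trans hnm), ← hω1 i (hi.trans hnm), hω2 i hi]

lemma cyl_measure {K : S → PMF S} {ν : S → Measure (ℕ → S)} (h : IsPathMeasure K ν)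
    (s : S) (x : ℕ → S) (n : ℕ) :
    ν s (Cyl x n) = (if x 0 = s then 1 else 0) * ∏ i ∈ Finset.range n, (K (x i)) (x (i + 1)) :=
  h.2 s n x

lemma measurable_shift (n : ℕ) : Measurable (fun (ω : ℕ → S) (t : ℕ) => ω (n + t)) := by
  rw [measurable_pi_iff]
  exact fun t => measurable_pi_apply (n + t)

lemma shift_cyl_inter_cyl_of_eq (x y : ℕ → S) (n m : ℕ) (hxy : y 0 = x n) :
    Cyl x n ∩ (fun ω t => ω (n + t)) ⁻¹' Cyl y m =
      Cyl (fun i => if i ≤ n then x i else y (i - n)) (n + m) := by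
  ext ω
  simp only [Cyl, mem_inter_iff, mem_setOf_eq, mem_preimage]
  constructor
  · rintro ⟨h1, h2⟩ i hi
    by_cases hin : i ≤ n
    · simp [hin, h1 i hin]
    · push_neg at hin
      simp only [if_neg (not_le.mpr hin)]
      have h2' := h2 (i - n) (by omega)
      rw [show n + (i - n) = i by omega] at h2'
      exact h2'
  · intro hz
    constructor
    · intro i hi
      have := hz i (hi.trans (Nat.le_add_right _ _))
      simpa [hi] using this
    · intro j hj
      have := hz (n + j) (by omega)
      rcases Nat.eq_zero_or_pos j with rfl | hjpos
      · simpa [hxy] using this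
      · have hnot : ¬ (n + j ≤ n) := by omega
        simpa [hnot, Nat.add_sub_cancel_left] using this

lemma markov {K : S → PMF S} {ν : S → Measure (ℕ → S)} (h : IsPathMeasure K ν)
    (s : S) (n : ℕ) (x : ℕ → S) {E : Set (ℕ → S)} (hE : MeasurableSet E) :
    ν s (Cyl x n ∩ (fun ω t => ω (n + t)) ⁻¹' E) = ν s (Cyl x n) * ν (x n) E := by
  haveI := h.1 s
  haveI := h.1 (x n)
  set shift : (ℕ → S) → (ℕ → S) := fun ω t => ω (n + t) with hshift_def
  have hshift : Measurable shift := measurable_shift n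
  set ν₁ : Measure (ℕ → S) := Measure.map shift ((ν s).restrict (Cyl x n)) with hν₁
  set ν₂ : Measure (ℕ → S) := (ν s (Cyl x n)) • (ν (x n)) with hν₂
  have happly : ∀ {F : Set (ℕ → S)}, MeasurableSet F →
      ν₁ F = ν s (Cyl x n ∩ shift ⁻¹' F) := by
    intro F hF
    rw [hν₁, Measure.map_apply hshift hF, Measure.restrict_apply (hshift hF), inter_comm]
  haveI : IsFiniteMeasure ν₁ := by
    constructor
    rw [happly MeasurableSet.univ]
    exact (measure_mono (subset_univ _)).trans_lt (measure_lt_top _ _)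
  have hkey : ν₁ = ν₂ := by
    refine ext_of_generate_finite _ pi_eq_generateFrom_cyl isPiSystem_cyl ?_ ?_
    · rintro C ⟨y, m, rfl⟩
      rw [happly (measurableSet_cyl y m)]
      by_cases hxy : y 0 = x n
      · rw [shift_cyl_inter_cyl_of_eq x y n m hxy]
        rw [hν₂, Measure.smul_apply, smul_eq_mul, cyl_measure h, cyl_measure h, cyl_measure h]
        rw [Finset.prod_range_add]
        have h00 : (if 0 ≤ n then x 0 else y (0 - n)) = x 0 := if_pos (Nat.zero_le n)
        rw [h00, if_pos hxy]
        have hpre : ∀ i ∈ Finset.range n,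
            (K (if i ≤ n then x i else y (i - n)))
              (if i + 1 ≤ n then x (i + 1) else y (i + 1 - n)) = (K (x i)) (x (i+1)) := by
          intro i hi
          rw [Finset.mem_range] at hi
          rw [if_pos (Nat.le_of_lt hi), if_pos (Nat.succ_le_of_lt hi)]
        have hsuf : ∀ j ∈ Finset.range m,
            (K (if n + j ≤ n then x (n + j) else y (n + j - n)))
              (if n + j + 1 ≤ n then x (n + j + 1) else y (n + j + 1 - n)) =
            (K (y j)) (y (j+1)) := by
          intro j hj
          have h1 : (if n + j ≤ n then x (n + j) else y (n + j - n)) = y j := by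
            rcases Nat.eq_zero_or_pos j with rfl | hjpos
            · simp [hxy]
            · have hn : ¬ (n + j ≤ n) := by omega
              rw [if_neg hn, Nat.add_sub_cancel_left]
          have h2 : (if n + j + 1 ≤ n then x (n + j + 1) else y (n + j + 1 - n)) = y (j + 1) := by
            have hn : ¬ (n + j + 1 ≤ n) := by omega
            rw [if_neg hn, show n + j + 1 - n = j + 1 by omega]
          rw [h1, h2]
        rw [Finset.prod_congr rfl hpre, Finset.prod_congr rfl hsuf, one_mul]
        ring
      · have hempty : Cyl x n ∩ shift ⁻¹' Cyl y m = ∅ := by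
          apply eq_empty_of_forall_notMem
          rintro ω ⟨h1, h2⟩
          have h3 : ω (n + 0) = y 0 := h2 0 (Nat.zero_le m)
          have h4 : ω n = x n := h1 n le_rfl
          exact hxy (by rw [← h3]; simpa using h4)
        rw [hempty, measure_empty, hν₂, Measure.smul_apply, smul_eq_mul, cyl_measure h (x n) y m,
          if_neg hxy, zero_mul, mul_zero]
    · rw [happly MeasurableSet.univ, hν₂]
      simp [measure_univ]
  have := congrArg (fun m : Measure (ℕ → S) => m E) hkey
  simp only [hν₂, Measure.smul_apply, smul_eq_mul] at this
  rw [← happly hE]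
  exact this

lemma cyl_zero_eq (s : S) : Cyl (fun _ => s) 0 = {ω : ℕ → S | ω 0 = s} := by
  ext ω
  simp [Cyl, Nat.le_zero]

lemma start_ae {K : S → PMF S} {ν : S → Measure (ℕ → S)} (h : IsPathMeasure K ν) (s : S) :
    ν s {ω | ω 0 ≠ s} = 0 := by
  haveI := h.1 s
  have h1 : ν s {ω : ℕ → S | ω 0 = s} = 1 := by
    rw [← cyl_zero_eq, cyl_measure h]
    simp
  have hms : MeasurableSet {ω : ℕ → S | ω 0 = s} := by
    rw [← cyl_zero_eq]; exact measurableSet_cyl _ _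
  have : {ω : ℕ → S | ω 0 ≠ s} = {ω : ℕ → S | ω 0 = s}ᶜ := rfl
  rw [this, measure_compl hms (measure_ne_top _ _), h1, measure_univ, tsub_self]

lemma absorb_ae {K : S → PMF S} {ν : S → Measure (ℕ → S)} (h : IsPathMeasure K ν)
    (Acc : Set S) (hK : ∀ s ∈ Acc, (K s).support ⊆ Acc) (s : S) :
    ν s {ω | ∃ t, ω t ∈ Acc ∧ ω (t+1) ∉ Acc} = 0 := by
  have hsplit : {ω : ℕ → S | ∃ t, ω t ∈ Acc ∧ ω (t+1) ∉ Acc} =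
      ⋃ t : ℕ, {ω : ℕ → S | ω t ∈ Acc ∧ ω (t+1) ∉ Acc} := by
    ext ω; simp
  rw [hsplit]
  refine measure_iUnion_null fun t => ?_
  have hQ : {ω : ℕ → S | ω t ∈ Acc ∧ ω (t+1) ∉ Acc} =
      {ω : ℕ → S | ∀ i ≤ t + 1,
        (fun (i : ℕ) (c : S) => (i = t → c ∈ Acc) ∧ (i = t + 1 → c ∉ Acc)) i (ω i)} := by
    ext ω
    simp only [mem_setOf_eq]
    constructor
    · rintro ⟨h1, h2⟩ i _
      exact ⟨fun hi => hi ▸ h1, fun hi => hi ▸ h2⟩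
    · intro hQ
      exact ⟨(hQ t (by omega)).1 rfl, (hQ (t+1) le_rfl).2 rfl⟩
  rw [hQ, prefix_eq_iUnion_cyl (S := S)
    (fun (i : ℕ) (c : S) => (i = t → c ∈ Acc) ∧ (i = t + 1 → c ∉ Acc)) (t+1)]
  refine measure_iUnion_null fun v => measure_iUnion_null fun hv => ?_
  rw [cyl_measure h]
  have hmem : t ∈ Finset.range (t+1) := Finset.self_mem_range_succ t
  have hzero : (K (extv (t+1) v t)) (extv (t+1) v (t+1)) = 0 := by
    rw [extv_eq (t+1) v (by omega), extv_eq (t+1) v le_rfl]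
    by_contra hne
    have hsupp : v ⟨t+1, by omega⟩ ∈ (K (v ⟨t, by omega⟩)).support := hne
    have h1 : (v ⟨t, by omega⟩ : S) ∈ Acc := (hv ⟨t, by omega⟩).1 rfl
    have h2 : (v ⟨t+1, by omega⟩ : S) ∉ Acc := (hv ⟨t+1, by omega⟩).2 rfl
    exact h2 (hK _ h1 hsupp)
  rw [Finset.prod_eq_zero hmem hzero, mul_zero]

section Ret
variable (Acc : Set S) {γacc γ rn : ℝ}
variable (hrn : rn < 0) (hγ : 0 < γ ∧ γ < 1) (hγacc : 0 < γacc ∧ γacc < 1)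

noncomputable def retTerm (γacc γ rn : ℝ) (ω : ℕ → S) (t : ℕ) : ℝ :=
  Rw Acc γacc rn (ω (t + 1)) * ∏ k ∈ Finset.range t, Γw Acc γacc γ (ω (k + 1))

lemma ret_eq_tsum (ω : ℕ → S) : Ret Acc γacc γ rn ω = ∑' t, retTerm Acc γacc γ rn ω t := rfl

include hrn hγ hγacc

lemma gam_pos (c : S) : 0 < Γw Acc γacc γ c := by
  unfold Γw; split <;> [exact hγacc.1; exact hγ.1]

lemma rw_nonpos (c : S) : Rw Acc γacc rn c ≤ 0 := by
  unfold Rw; split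
  · exact le_of_lt (mul_neg_of_pos_of_neg (by linarith [hγacc.2]) hrn)
  · exact le_refl 0

lemma retTerm_nonpos (ω : ℕ → S) (t : ℕ) : retTerm Acc γacc γ rn ω t ≤ 0 :=
  mul_nonpos_of_nonpos_of_nonneg (rw_nonpos Acc hrn hγ hγacc _)
    (Finset.prod_nonneg fun k _ => le_of_lt (gam_pos Acc hrn hγ hγacc _))

lemma retTerm_bound (ω : ℕ → S) (t : ℕ) :
    ‖retTerm Acc γacc γ rn ω t‖ ≤ ((1 - γacc) * (-rn)) * (max γ γacc) ^ t := by
  rw [retTerm, norm_mul]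
  have h1 : ‖Rw Acc γacc rn (ω (t+1))‖ ≤ (1 - γacc) * (-rn) := by
    unfold Rw; split
    · rw [Real.norm_eq_abs, abs_of_nonpos (le_of_lt (mul_neg_of_pos_of_neg (by linarith [hγacc.2]) hrn))]
      rw [neg_mul_eq_mul_neg]
    · simp only [norm_zero]
      exact le_of_lt (mul_pos (by linarith [hγacc.2]) (by linarith))
  have h2 : ‖∏ k ∈ Finset.range t, Γw Acc γacc γ (ω (k+1))‖ ≤ (max γ γacc) ^ t := by
    rw [Real.norm_eq_abs, abs_of_nonneg (Finset.prod_nonneg fun k _ =>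
      le_of_lt (gam_pos Acc hrn hγ hγacc _))]
    calc ∏ k ∈ Finset.range t, Γw Acc γacc γ (ω (k+1))
        ≤ ∏ _k ∈ Finset.range t, max γ γacc := by
          refine Finset.prod_le_prod (fun k _ => le_of_lt (gam_pos Acc hrn hγ hγacc _))
            (fun k _ => ?_)
          unfold Γw; split <;> [exact le_max_right _ _; exact le_max_left _ _]
      _ = (max γ γacc) ^ t := by rw [Finset.prod_const, Finset.card_range]
  calc ‖Rw Acc γacc rn (ω (t+1))‖ * ‖∏ k ∈ Finset.range t, Γw Acc γacc γ (ω (k+1))‖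
      ≤ ((1 - γacc) * (-rn)) * (max γ γacc) ^ t := by
        apply mul_le_mul h1 h2 (norm_nonneg _)
        exact le_of_lt (mul_pos (by linarith [hγacc.2]) (by linarith))

lemma max_lt_one : max γ γacc < 1 := max_lt hγ.2 hγacc.2

lemma ret_summable (ω : ℕ → S) : Summable (retTerm Acc γacc γ rn ω) := by
  refine Summable.of_norm_bounded ?_ (retTerm_bound Acc hrn hγ hγacc ω)
  exact (summable_geometric_of_lt_one (le_trans hγ.1.le (le_max_left _ _))
    (max_lt_one hrn hγ hγacc)).mul_left _

lemma ret_nonpos (ω : ℕ → S) : Ret Acc γacc γ rn ω ≤ 0 :=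
  tsum_nonpos (retTerm_nonpos Acc hrn hγ hγacc ω)

lemma ret_abs_bound (ω : ℕ → S) :
    ‖Ret Acc γacc γ rn ω‖ ≤ ((1 - γacc) * (-rn)) * (1 - max γ γacc)⁻¹ := by
  have hsum := ret_summable Acc hrn hγ hγacc ω
  have hgeom : Summable (fun t : ℕ => ((1 - γacc) * (-rn)) * (max γ γacc) ^ t) :=
    (summable_geometric_of_lt_one (le_trans hγ.1.le (le_max_left _ _))
      (max_lt_one hrn hγ hγacc)).mul_left _
  have hnorm : Summable (fun t => ‖retTerm Acc γacc γ rn ω t‖) :=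
    Summable.of_nonneg_of_le (fun t => norm_nonneg _) (retTerm_bound Acc hrn hγ hγacc ω) hgeom
  calc ‖Ret Acc γacc γ rn ω‖ ≤ ∑' t, ‖retTerm Acc γacc γ rn ω t‖ :=
        norm_tsum_le_tsum_norm hnorm
    _ ≤ ∑' t, ((1 - γacc) * (-rn)) * (max γ γacc) ^ t :=
        Summable.tsum_le_tsum (retTerm_bound Acc hrn hγ hγacc ω) hnorm hgeom
    _ = ((1 - γacc) * (-rn)) * (1 - max γ γacc)⁻¹ := by
        rw [tsum_mul_left, tsum_geometric_of_lt_one (le_trans hγ.1.le (le_max_left _ _))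
          (max_lt_one hrn hγ hγacc)]

omit hrn hγ hγacc in
lemma ret_eq_zero_of_safe {ω : ℕ → S} (hω : ∀ t, ω t ∉ Acc) : Ret Acc γacc γ rn ω = 0 := by
  rw [ret_eq_tsum]
  have : ∀ t, retTerm Acc γacc γ rn ω t = 0 := by
    intro t
    rw [retTerm, Rw, if_neg (hω (t+1)), zero_mul]
  rw [tsum_congr this, tsum_zero]

lemma not_acc_of_ret_eq_zero {ω : ℕ → S} (hret : Ret Acc γacc γ rn ω = 0) (t : ℕ) :
    ω (t + 1) ∉ Acc := by
  intro hmem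
  have hsum := ret_summable Acc hrn hγ hγacc ω
  have hterm_zero : retTerm Acc γacc γ rn ω t = 0 := by
    have hneg : ∀ u, (-retTerm Acc γacc γ rn ω u) ≥ 0 :=
      fun u => neg_nonneg.mpr (retTerm_nonpos Acc hrn hγ hγacc ω u)
    have hsumneg : Summable (fun u => -retTerm Acc γacc γ rn ω u) := hsum.neg
    have htsum : ∑' u, (-retTerm Acc γacc γ rn ω u) = 0 := by
      rw [tsum_neg, ret_eq_tsum] at *
      rw [hret, neg_zero]
    have hle := Summable.le_tsum hsumneg t (fun j _ => hneg j)
    rw [htsum] at hle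
    linarith [hneg t]
  have hposprod : 0 < ∏ k ∈ Finset.range t, Γw Acc γacc γ (ω (k+1)) :=
    Finset.prod_pos fun k _ => gam_pos Acc hrn hγ hγacc _
  have : retTerm Acc γacc γ rn ω t < 0 := by
    rw [retTerm, Rw, if_pos hmem]
    exact mul_neg_of_neg_of_pos (mul_neg_of_pos_of_neg (by linarith [hγacc.2]) hrn) hposprod
  linarith

lemma ret_measurable : Measurable (Ret Acc γacc γ rn : (ℕ → S) → ℝ) := by
  have hterm : ∀ t, Measurable (fun ω : ℕ → S => retTerm Acc γacc γ rn ω t) := by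
    intro t
    refine Measurable.mul ?_ ?_
    · exact (measurable_of_countable (Rw Acc γacc rn)).comp (measurable_pi_apply (t+1))
    · refine Finset.measurable_prod _ fun k _ => ?_
      exact (measurable_of_countable (Γw Acc γacc γ)).comp (measurable_pi_apply (k+1))
  have hF : ∀ n, Measurable (fun ω : ℕ → S => ∑ t ∈ Finset.range n, retTerm Acc γacc γ rn ω t) :=
    fun n => Finset.measurable_sum _ fun t _ => hterm t
  apply measurable_of_tendsto_metrizable hF
  rw [tendsto_pi_nhds]
  intro ω
  exact (ret_summable Acc hrn hγ hγacc ω).hasSum.tendsto_sum_nat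

lemma ret_integrable {ν : Measure (ℕ → S)} [IsProbabilityMeasure ν] :
    Integrable (Ret Acc γacc γ rn) ν := by
  refine Integrable.mono' (integrable_const (((1 - γacc) * (-rn)) * (1 - max γ γacc)⁻¹))
    (ret_measurable Acc hrn hγ hγacc).aestronglyMeasurable ?_
  exact Filter.Eventually.of_forall (ret_abs_bound Acc hrn hγ hγacc)

end Ret
end Aux

section Main
variable {A : S → Type*}
variable [Fintype S] [MeasurableSpace S] [MeasurableSingletonClass S]
variable [∀ s : S, Fintype (A s)] [∀ s : S, Nonempty (A s)]
variable (P : (s : S) → A s → PMF S) (Acc : Set S)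
variable (μ : ((s : S) → A s) → S → Measure (ℕ → S))
variable (hμ : ∀ π : (s : S) → A s, IsPathMeasure (fun s => P s (π s)) (μ π))
variable {rn γ γacc : ℝ}
variable (hrn : rn < 0) (hγ : 0 < γ ∧ γ < 1) (hγacc : 0 < γacc ∧ γacc < 1)
variable (πo : (s : S) → A s) (hopt : IsOptimal Acc γacc γ rn μ πo)

include hμ in
lemma win_not_acc {w : S} (hw : w ∈ WinRegion Acc μ) : w ∉ Acc := by
  obtain ⟨π, hπ⟩ := hw
  intro hacc
  have h0 := start_ae (hμ π) w
  have hsub : {ω : ℕ → S | ∀ t, ω t ∉ Acc} ⊆ {ω : ℕ → S | ω 0 ≠ w} := by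
    intro ω hω heq
    exact (heq ▸ hω 0) hacc
  have := measure_mono_null hsub h0
  rw [hπ] at this
  exact one_ne_zero this

lemma measurableSet_safe : MeasurableSet {ω : ℕ → S | ∀ t, ω t ∉ Acc} := by
  have : {ω : ℕ → S | ∀ t, ω t ∉ Acc} = ⋂ t : ℕ, (fun ω : ℕ → S => ω t) ⁻¹' Accᶜ := by
    ext ω; simp
  rw [this]
  exact MeasurableSet.iInter fun t => measurable_pi_apply t MeasurableSet.of_discrete

include hμ hrn hγ hγacc hopt in
lemma win_safe {w : S} (hw : w ∈ WinRegion Acc μ) :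
    μ πo w {ω : ℕ → S | ∀ t, ω t ∉ Acc}ᶜ = 0 := by
  have hnacc : w ∉ Acc := win_not_acc P Acc μ hμ hw
  obtain ⟨π, hπ⟩ := hw
  haveI := (hμ π).1 w
  haveI := (hμ πo).1 w
  have hcompl : μ π w {ω : ℕ → S | ∀ t, ω t ∉ Acc}ᶜ = 0 := by
    rw [measure_compl (measurableSet_safe Acc) (measure_ne_top _ _), hπ, measure_univ, tsub_self]
  have hVπ : Valp Acc γacc γ rn μ π w = 0 := by
    unfold Valp
    have hae : (Ret Acc γacc γ rn) =ᵐ[μ π w] 0 := by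
      rw [Filter.EventuallyEq, ae_iff]
      refine measure_mono_null ?_ hcompl
      intro ω hω
      simp only [mem_setOf_eq, Pi.zero_apply] at hω
      simp only [mem_compl_iff, mem_setOf_eq]
      intro hsafe
      exact hω (ret_eq_zero_of_safe Acc hsafe)
    rw [integral_congr_ae hae]
    simp
  have hle : ∀ π' : (s' : S) → A s', Valp Acc γacc γ rn μ π' w ≤ 0 := by
    intro π'
    haveI := (hμ π').1 w
    exact integral_nonpos (ret_nonpos Acc hrn hγ hγacc)
  have hsup : (⨆ π' : (s' : S) → A s', Valp Acc γacc γ rn μ π' w) = 0 := by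
    refine le_antisymm (ciSup_le hle) ?_
    calc (0:ℝ) = Valp Acc γacc γ rn μ π w := hVπ.symm
      _ ≤ ⨆ π' : (s' : S) → A s', Valp Acc γacc γ rn μ π' w :=
        le_ciSup (f := fun π' : (s' : S) → A s' => Valp Acc γacc γ rn μ π' w)
          (Set.Finite.bddAbove (Set.finite_range _)) π
  have hVo : Valp Acc γacc γ rn μ πo w = 0 := by rw [hopt w]; exact hsup
  have hint : Integrable (Ret Acc γacc γ rn) (μ πo w) := ret_integrable Acc hrn hγ hγacc
  have hzero : ∫ ω, -Ret Acc γacc γ rn ω ∂(μ πo w) = 0 := by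
    unfold Valp at hVo
    rw [integral_neg, hVo, neg_zero]
  have hae0 : (fun ω => -Ret Acc γacc γ rn ω) =ᵐ[μ πo w] 0 :=
    (integral_eq_zero_iff_of_nonneg
      (fun ω => neg_nonneg.mpr (ret_nonpos Acc hrn hγ hγacc ω)) hint.neg).mp hzero
  have haeAcc : ∀ᵐ ω ∂(μ πo w), ∀ t, ω (t+1) ∉ Acc := by
    refine hae0.mono fun ω h => ?_
    simp only [Pi.zero_apply, neg_eq_zero] at h
    exact not_acc_of_ret_eq_zero Acc hrn hγ hγacc h
  have hae00 : ∀ᵐ ω ∂(μ πo w), ω 0 = w := by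
    rw [ae_iff]
    exact start_ae (hμ πo) w
  have hfinal : ∀ᵐ ω ∂(μ πo w), ∀ t, ω t ∉ Acc := by
    refine (haeAcc.and hae00).mono fun ω ⟨h1, h2⟩ t => ?_
    cases t with
    | zero => rw [h2]; exact hnacc
    | succ u => exact h1 u
  have : {ω : ℕ → S | ∀ t, ω t ∉ Acc}ᶜ = {ω : ℕ → S | ¬ ∀ t, ω t ∉ Acc} := rfl
  rw [this]
  exact ae_iff.mp hfinal

end Main

/-- under an optimal policy, (i) almost every path that eventually reaches
the winning region is safe, and (ii) the set of safe paths never visiting the winning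
region is null. -/
theorem optimal_policy_safe_and_reach_winning_region
    [Fintype S] [Nonempty S] [MeasurableSpace S] [MeasurableSingletonClass S]
    [∀ s, Fintype (A s)] [∀ s, Nonempty (A s)]
    (P : (s : S) → A s → PMF S) (Acc : Set S)
    (habs : ∀ s ∈ Acc, ∀ a : A s, (P s a).support ⊆ Acc)
    (μ : ((s : S) → A s) → S → Measure (ℕ → S))
    (hμ : ∀ π : (s : S) → A s, IsPathMeasure (fun s => P s (π s)) (μ π))
    (rn γ γacc : ℝ) (hrn : rn < 0) (hγ : 0 < γ ∧ γ < 1) (hγacc : 0 < γacc ∧ γacc < 1)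
    (πo : (s : S) → A s) (hopt : IsOptimal Acc γacc γ rn μ πo) :
    ∀ s : S,
      μ πo s ({ω | ∀ t, ω t ∉ Acc} ∩ {ω | ∃ t, ω t ∈ WinRegion Acc μ}) =
          μ πo s {ω | ∃ t, ω t ∈ WinRegion Acc μ} ∧
        μ πo s ({ω | ∀ t, ω t ∉ Acc} ∩ {ω | ∀ t, ω t ∉ WinRegion Acc μ}) = 0 := by
  intro s
  classical
  set W := WinRegion Acc μ with hW
  have h := hμ πo
  haveI := h.1 s
  set Safe : Set (ℕ → S) := {ω : ℕ → S | ∀ t, ω t ∉ Acc} with hSafeDef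
  have hSafeMeas : MeasurableSet Safe := measurableSet_safe Acc
  have hWAcc : ∀ w ∈ W, w ∉ Acc := fun w hw => win_not_acc P Acc μ hμ hw
  -- each "reach W at time t then unsafe" set is null
  have hHt : ∀ t : ℕ, μ πo s ({ω : ℕ → S | ω t ∈ W} ∩ (fun ω u => ω (t + u)) ⁻¹' Safeᶜ) = 0 := by
    intro t
    have hWt : {ω : ℕ → S | ω t ∈ W} =
        {ω : ℕ → S | ∀ i ≤ t, (fun (i : ℕ) (c : S) => i = t → c ∈ W) i (ω i)} := by
      ext ω
      simp only [mem_setOf_eq]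
      exact ⟨fun hmem i _ hi => hi ▸ hmem, fun h' => h' t le_rfl rfl⟩
    rw [hWt, prefix_eq_iUnion_cyl (S := S) (fun (i : ℕ) (c : S) => i = t → c ∈ W) t,
      iUnion_inter]
    refine measure_iUnion_null fun v => ?_
    rw [iUnion_inter]
    refine measure_iUnion_null fun hv => ?_
    rw [markov h s t (extv t v) hSafeMeas.compl]
    have hvt : extv t v t ∈ W := by
      rw [extv_eq t v le_rfl]
      exact hv ⟨t, Nat.lt_succ_self t⟩ rfl
    rw [win_safe P Acc μ hμ hrn hγ hγacc πo hopt hvt, mul_zero]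
  have hBadNull : μ πo s {ω : ℕ → S | ∃ t, ω t ∈ Acc ∧ ω (t+1) ∉ Acc} = 0 :=
    absorb_ae h Acc (fun c hc => habs c hc (πo c)) s
  have hpart1 : μ πo s ({ω : ℕ → S | ∃ t, ω t ∈ W} ∩ Safeᶜ) = 0 := by
    have hsub : {ω : ℕ → S | ∃ t, ω t ∈ W} ∩ Safeᶜ ⊆
        {ω : ℕ → S | ∃ t, ω t ∈ Acc ∧ ω (t+1) ∉ Acc} ∪
          ⋃ t : ℕ, ({ω : ℕ → S | ω t ∈ W} ∩ (fun ω u => ω (t + u)) ⁻¹' Safeᶜ) := by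
      rintro ω ⟨⟨t0, ht0⟩, hunsafe⟩
      by_cases hbad : ω ∈ {ω : ℕ → S | ∃ t, ω t ∈ Acc ∧ ω (t+1) ∉ Acc}
      · exact Or.inl hbad
      · right
        simp only [mem_setOf_eq, not_exists, not_and, not_not] at hbad
        obtain ⟨u, hu⟩ : ∃ u, ω u ∈ Acc := by
          by_contra hno
          push_neg at hno
          exact hunsafe hno
        have habs' : ∀ v, ω (u + v) ∈ Acc := by
          intro v
          induction v with
          | zero => simpa using hu
          | succ k ih => exact hbad (u + k) ih
        refine mem_iUnion.2 ⟨t0, ht0, ?_⟩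
        simp only [mem_preimage, mem_compl_iff, hSafeDef, mem_setOf_eq, not_forall, not_not]
        rcases le_or_gt t0 u with hle | hlt
        · exact ⟨u - t0, by rw [show t0 + (u - t0) = u by omega]; exact hu⟩
        · exfalso
          have hacc : ω t0 ∈ Acc := by
            have h2 := habs' (t0 - u)
            rwa [show u + (t0 - u) = t0 by omega] at h2
          exact hWAcc _ ht0 hacc
    exact measure_mono_null hsub (measure_union_null hBadNull (measure_iUnion_null hHt))
  constructor
  · refine le_antisymm (measure_mono inter_subset_right) ?_
    have hsub : {ω : ℕ → S | ∃ t, ω t ∈ W} ⊆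
        (Safe ∩ {ω : ℕ → S | ∃ t, ω t ∈ W}) ∪ ({ω : ℕ → S | ∃ t, ω t ∈ W} ∩ Safeᶜ) := by
      intro ω hω
      by_cases h' : ω ∈ Safe
      · exact Or.inl ⟨h', hω⟩
      · exact Or.inr ⟨hω, h'⟩
    calc μ πo s {ω : ℕ → S | ∃ t, ω t ∈ W}
        ≤ μ πo s ((Safe ∩ {ω : ℕ → S | ∃ t, ω t ∈ W}) ∪ ({ω : ℕ → S | ∃ t, ω t ∈ W} ∩ Safeᶜ)) :=
          measure_mono hsub
      _ ≤ μ πo s (Safe ∩ {ω : ℕ → S | ∃ t, ω t ∈ W}) + μ πo s ({ω : ℕ → S | ∃ t, ω t ∈ W} ∩ Safeᶜ) :=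
          measure_union_le _ _
      _ = μ πo s (Safe ∩ {ω : ℕ → S | ∃ t, ω t ∈ W}) := by rw [hpart1, add_zero]
  · -- part (ii)
    set E : ℕ → Set (ℕ → S) := fun n => {ω : ℕ → S | ∀ t ≤ n, ω t ∉ Acc} with hE
    have hEmeas : ∀ n, MeasurableSet (E n) := by
      intro n
      have hrw : E n = ⋂ t ∈ Finset.range (n+1), (fun ω : ℕ → S => ω t) ⁻¹' Accᶜ := by
        ext ω; simp [hE, Nat.lt_succ_iff]
      rw [hrw]
      exact MeasurableSet.biInter (Finset.range (n+1)).countable_toSet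
        (fun t _ => measurable_pi_apply t MeasurableSet.of_discrete)
    have hEanti : Antitone E := fun a b hab ω hω t ht => hω t (ht.trans hab)
    have hEinter : ⋂ n, E n = Safe := by
      ext ω
      simp only [mem_iInter, hE, mem_setOf_eq, hSafeDef]
      exact ⟨fun h' t => h' t t le_rfl, fun h' n t _ => h' t⟩
    have hex : ∀ w : S, w ∉ W → ∃ n, μ πo w (E n) < 1 := by
      intro w hw
      haveI := h.1 w
      have hne : μ πo w Safe ≠ 1 := fun heq => hw ⟨πo, heq⟩
      have hlt : μ πo w Safe < 1 := lt_of_le_of_ne prob_le_one hne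
      have hten : Filter.Tendsto (⇑(μ πo w) ∘ E) Filter.atTop (nhds (μ πo w Safe)) := by
        have h2 := tendsto_measure_iInter_atTop (μ := μ πo w)
          (fun n => (hEmeas n).nullMeasurableSet) hEanti ⟨0, measure_ne_top _ _⟩
        rwa [hEinter] at h2
      exact (hten.eventually_lt_const hlt).exists
    choose! nfun hnfun using hex
    set N : ℕ := Finset.univ.sup nfun with hN
    set c : ℝ≥0∞ := (Finset.univ.filter (fun w : S => w ∉ W)).sup (fun w => μ πo w (E N)) with hc
    have hclt : c < 1 := by
      rw [hc]
      refine (Finset.sup_lt_iff (by norm_num)).mpr ?_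
      intro w hwmem
      rw [Finset.mem_filter] at hwmem
      exact lt_of_le_of_lt
        (measure_mono (hEanti (Finset.le_sup (Finset.mem_univ w)))) (hnfun w hwmem.2)
    have hcle : ∀ w : S, w ∉ W → μ πo w (E N) ≤ c := by
      intro w hw
      rw [hc]
      exact Finset.le_sup (f := fun w => μ πo w (E N))
        (Finset.mem_filter.mpr ⟨Finset.mem_univ w, hw⟩)
    set B : ℕ → Set (ℕ → S) :=
      fun m => {ω : ℕ → S | ∀ t ≤ m, (fun (_ : ℕ) (a : S) => a ∉ Acc ∧ a ∉ W) t (ω t)} with hB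
    have hstep : ∀ m : ℕ, μ πo s (B (m + N)) ≤ μ πo s (B m) * c := by
      intro m
      have hBm2 : B m = ⋃ (v : Fin (m+1) → S)
          (_ : ∀ i : Fin (m+1), (v i ∉ Acc ∧ v i ∉ W)), Cyl (extv m v) m := by
        rw [hB]
        exact prefix_eq_iUnion_cyl (S := S) (fun (_ : ℕ) (a : S) => a ∉ Acc ∧ a ∉ W) m
      have hBm3 : B m = ⋃ i : {v : Fin (m+1) → S // ∀ i : Fin (m+1), (v i ∉ Acc ∧ v i ∉ W)},
          Cyl (extv m i.1) m := by
        rw [hBm2]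
        exact (iUnion_subtype (fun v : Fin (m+1) → S => ∀ i : Fin (m+1), v i ∉ Acc ∧ v i ∉ W)
          (fun i => Cyl (extv m i.1) m)).symm
      have hdisj : Pairwise (Function.onFun Disjoint
          fun i : {v : Fin (m+1) → S // ∀ i : Fin (m+1), (v i ∉ Acc ∧ v i ∉ W)} =>
            Cyl (extv m i.1) m) := by
        intro i j hij
        rw [Function.onFun, Set.disjoint_left]
        intro ω hωi hωj
        apply hij
        apply Subtype.ext
        funext idx
        have hidx : (idx : ℕ) ≤ m := Nat.lt_succ_iff.mp idx.2
        have h1 := hωi idx hidx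
        have h2 := hωj idx hidx
        rw [extv_eq m i.1 hidx] at h1
        rw [extv_eq m j.1 hidx] at h2
        have h3 := h1.symm.trans h2
        simpa using h3
      have hsum1 : μ πo s (B m) = ∑' i : {v : Fin (m+1) → S //
          ∀ i : Fin (m+1), (v i ∉ Acc ∧ v i ∉ W)}, μ πo s (Cyl (extv m i.1) m) := by
        rw [hBm3]
        exact measure_iUnion hdisj (fun i => measurableSet_cyl _ _)
      have hsub2 : B (m + N) ⊆ ⋃ i : {v : Fin (m+1) → S //
          ∀ i : Fin (m+1), (v i ∉ Acc ∧ v i ∉ W)},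
            (Cyl (extv m i.1) m ∩ (fun ω u => ω (m + u)) ⁻¹' (E N)) := by
        intro ω hω
        have hωB : ω ∈ B m := fun t ht => hω t (ht.trans (Nat.le_add_right m N))
        rw [hBm3] at hωB
        obtain ⟨i, hi⟩ := mem_iUnion.mp hωB
        refine mem_iUnion.2 ⟨i, hi, ?_⟩
        intro t ht
        exact (hω (m+t) (by omega)).1
      calc μ πo s (B (m+N))
          ≤ μ πo s (⋃ i : {v : Fin (m+1) → S // ∀ i : Fin (m+1), (v i ∉ Acc ∧ v i ∉ W)},
              (Cyl (extv m i.1) m ∩ (fun ω u => ω (m + u)) ⁻¹' (E N))) := measure_mono hsub2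
        _ ≤ ∑' i : {v : Fin (m+1) → S // ∀ i : Fin (m+1), (v i ∉ Acc ∧ v i ∉ W)},
              μ πo s (Cyl (extv m i.1) m ∩ (fun ω u => ω (m + u)) ⁻¹' (E N)) :=
            measure_iUnion_le _
        _ = ∑' i : {v : Fin (m+1) → S // ∀ i : Fin (m+1), (v i ∉ Acc ∧ v i ∉ W)},
              μ πo s (Cyl (extv m i.1) m) * μ πo (extv m i.1 m) (E N) :=
            tsum_congr fun i => markov h s m (extv m i.1) (hEmeas N)
        _ ≤ ∑' i : {v : Fin (m+1) → S // ∀ i : Fin (m+1), (v i ∉ Acc ∧ v i ∉ W)},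
              μ πo s (Cyl (extv m i.1) m) * c := by
            refine Summable.tsum_le_tsum (fun i => ?_) ENNReal.summable ENNReal.summable
            refine mul_le_mul_right ?_ _
            have hnW : extv m i.1 m ∉ W := by
              rw [extv_eq m i.1 le_rfl]
              exact (i.2 ⟨m, Nat.lt_succ_self m⟩).2
            exact hcle _ hnW
        _ = (∑' i : {v : Fin (m+1) → S // ∀ i : Fin (m+1), (v i ∉ Acc ∧ v i ∉ W)},
              μ πo s (Cyl (extv m i.1) m)) * c := ENNReal.tsum_mul_right
        _ = μ πo s (B m) * c := by rw [hsum1]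
    have hiter : ∀ k : ℕ, μ πo s (B (k * N)) ≤ c ^ k := by
      intro k
      induction k with
      | zero => simpa using prob_le_one
      | succ k ih =>
        have hkn : (k+1) * N = k * N + N := by ring
        rw [hkn]
        calc μ πo s (B (k*N + N)) ≤ μ πo s (B (k*N)) * c := hstep _
          _ ≤ c ^ k * c := mul_le_mul_left ih c
          _ = c ^ (k+1) := (pow_succ c k).symm
    have hDsub : ∀ k, (Safe ∩ {ω : ℕ → S | ∀ t, ω t ∉ W}) ⊆ B (k * N) :=
      fun k ω hω t _ => ⟨hω.1 t, hω.2 t⟩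
    have hten0 : Filter.Tendsto (fun k : ℕ => c ^ k) Filter.atTop (nhds 0) :=
      ENNReal.tendsto_pow_atTop_nhds_zero_of_lt_one hclt
    have hle0 : μ πo s (Safe ∩ {ω : ℕ → S | ∀ t, ω t ∉ W}) ≤ 0 :=
      ge_of_tendsto' hten0 fun k => (measure_mono (hDsub k)).trans (hiter k)
    exact le_antisymm hle0 (zero_le)
end

section
/- Assume Acc is absorbing, and let U = {s' ∈ S : μ_{s'}(Safe) = 1}. Then for every s ∈ S: μ_s({ω : ∀ t, ω t ∉ Acc ∪ U}) = 0; equivalently, almost every path of the chain eventually enters Acc or enters the set of states from which the chain is almost surely safe. -/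
open MeasureTheory Set
open scoped ENNReal Classical

variable {S : Type*}

/-! ### Auxiliary machinery -/

set_option linter.unusedSectionVars false

/-- The event of avoiding `B` during the first `n+1` steps. -/
def avoidSet (B : Set S) (n : ℕ) : Set (ℕ → S) := {ω | ∀ i ≤ n, ω i ∉ B}

lemma avoid_mono (B : Set S) {m n : ℕ} (h : m ≤ n) :
    avoidSet (S := S) B n ⊆ avoidSet B m :=
  fun _ hω i hi => hω i (hi.trans h)

/-- Weight of a finite path prefix. -/
noncomputable def pathW (P : S → PMF S) (s : S) (n : ℕ) (x : ℕ → S) : ℝ≥0∞ :=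
  (if x 0 = s then 1 else 0) * ∏ i ∈ Finset.range n, (P (x i)) (x (i + 1))

/-- Extend a finite path to an infinite one (constant after time `n`). -/
def extend' (n : ℕ) (x : Fin (n + 1) → S) : ℕ → S := fun i => x ⟨min i n, by omega⟩

lemma extend'_eq_of_le {n : ℕ} (x : Fin (n + 1) → S) {i : ℕ} (h : i ≤ n) :
    extend' n x i = x ⟨i, by omega⟩ := by
  unfold extend'
  congr 1
  exact Fin.ext (by simpa using Nat.min_eq_left h)

lemma extend'_apply_fin {n : ℕ} (x : Fin (n + 1) → S) (i : Fin (n + 1)) :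
    extend' n x i = x i := by
  rw [extend'_eq_of_le x (Nat.lt_succ_iff.mp i.isLt)]

lemma extend'_cons_zero {n : ℕ} (a : S) (y : Fin (n + 1) → S) :
    extend' (n + 1) (Fin.cons a y) 0 = a := by
  rw [extend'_eq_of_le _ (Nat.zero_le _)]
  have h : (⟨0, by omega⟩ : Fin (n + 2)) = 0 := Fin.ext (by simp)
  rw [h, Fin.cons_zero]

lemma extend'_cons_succ {n : ℕ} (a : S) (y : Fin (n + 1) → S) (i : ℕ) :
    extend' (n + 1) (Fin.cons a y) (i + 1) = extend' n y i := by
  unfold extend'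
  have h : (⟨min (i + 1) (n + 1), by omega⟩ : Fin (n + 2)) =
      Fin.succ ⟨min i n, by omega⟩ := by
    apply Fin.ext
    simp [Nat.succ_min_succ]
  rw [h, Fin.cons_succ]

section Path

variable [Fintype S] [Nonempty S] [MeasurableSpace S] [MeasurableSingletonClass S]
  (P : S → PMF S) (μ : S → Measure (ℕ → S))

lemma measurableSet_all (B : Set S) : MeasurableSet B :=
  B.toFinite.measurableSet

lemma measurableSet_avoid (B : Set S) (n : ℕ) : MeasurableSet (avoidSet (S := S) B n) := by
  have h : avoidSet (S := S) B n = ⋂ i ∈ Finset.Iic n, (fun ω : ℕ → S => ω i) ⁻¹' Bᶜ := by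
    ext ω; simp [avoidSet]
  rw [h]
  exact Finset.measurableSet_biInter _
    (fun i _ => (measurable_pi_apply i) (measurableSet_all Bᶜ))

lemma measurableSet_cyl_s12 (x : ℕ → S) (n : ℕ) :
    MeasurableSet {ω : ℕ → S | ∀ i ≤ n, ω i = x i} := by
  have h : {ω : ℕ → S | ∀ i ≤ n, ω i = x i} =
      ⋂ i ∈ Finset.Iic n, (fun ω : ℕ → S => ω i) ⁻¹' {x i} := by
    ext ω; simp
  rw [h]
  exact Finset.measurableSet_biInter _
    (fun i _ => (measurable_pi_apply i) (measurableSet_singleton _))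

/-- Decomposition of the avoiding event as a sum over finite path prefixes. -/
lemma pathsum (hμ : IsPathMeasure P μ) (B : Set S) (n : ℕ) (s : S) :
    μ s (avoidSet B n) =
      ∑ x : Fin (n + 1) → S,
        if ∀ i, x i ∉ B then pathW P s n (extend' n x) else 0 := by
  classical
  set T : Finset (Fin (n + 1) → S) :=
    Finset.univ.filter (fun x : Fin (n + 1) → S => ∀ i, x i ∉ B) with hT
  have hset : avoidSet B n =
      ⋃ x ∈ T, {ω : ℕ → S | ∀ i ≤ n, ω i = extend' n x i} := by
    ext ω
    constructor
    · intro hω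
      have hx : (fun i : Fin (n + 1) => ω i) ∈ T := by
        simp only [hT, Finset.mem_filter, Finset.mem_univ, true_and]
        exact fun i => hω i (Nat.lt_succ_iff.mp i.isLt)
      refine Set.mem_biUnion hx ?_
      intro i hi
      rw [extend'_eq_of_le _ hi]
    · intro hω
      obtain ⟨x, hx, hωx⟩ := Set.mem_iUnion₂.mp hω
      intro i hi
      have h' := hωx i hi
      rw [extend'_eq_of_le _ hi] at h'
      rw [h']
      simp only [hT, Finset.mem_coe, Finset.mem_filter, Finset.mem_univ, true_and] at hx
      exact hx _
  have hdisj : (↑T : Set (Fin (n + 1) → S)).PairwiseDisjoint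
      (fun x => {ω : ℕ → S | ∀ i ≤ n, ω i = extend' n x i}) := by
    intro x _ y _ hxy
    refine Set.disjoint_left.mpr fun ω hωx hωy => hxy ?_
    funext i
    have hi : (i : ℕ) ≤ n := Nat.lt_succ_iff.mp i.isLt
    have h1 := hωx (i : ℕ) hi
    have h2 := hωy (i : ℕ) hi
    rw [extend'_apply_fin] at h1 h2
    rw [← h1, ← h2]
  rw [hset, measure_biUnion_finset hdisj (fun x _ => measurableSet_cyl_s12 (extend' n x) n)]
  calc ∑ x ∈ T, μ s {ω : ℕ → S | ∀ i ≤ n, ω i = extend' n x i}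
      = ∑ x ∈ T, pathW P s n (extend' n x) :=
        Finset.sum_congr rfl fun x _ => hμ.2 s n (extend' n x)
    _ = ∑ x : Fin (n + 1) → S,
          if ∀ i, x i ∉ B then pathW P s n (extend' n x) else 0 :=
        Finset.sum_filter _ _

lemma avoid_zero (hμ : IsPathMeasure P μ) (B : Set S) (s : S) :
    μ s (avoidSet B 0) = if s ∈ B then 0 else 1 := by
  classical
  rw [pathsum P μ hμ B 0 s]
  rw [← Equiv.sum_comp (Equiv.funUnique (Fin 1) S).symm]
  have key : ∀ a : S,
      (if ∀ i : Fin 1, ((Equiv.funUnique (Fin 1) S).symm a) i ∉ B then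
        pathW P s 0 (extend' 0 ((Equiv.funUnique (Fin 1) S).symm a)) else 0) =
      if a = s then (if s ∈ B then 0 else 1) else 0 := by
    intro a
    have h0 : extend' 0 ((Equiv.funUnique (Fin 1) S).symm a) 0 = a := by
      rw [extend'_eq_of_le _ (le_refl 0)]; rfl
    simp only [pathW, Finset.range_zero, Finset.prod_empty, mul_one, h0]
    by_cases hab : a ∈ B <;> by_cases has : a = s <;>
      simp_all [Equiv.funUnique]
  rw [Finset.sum_congr rfl (fun a _ => key a), Finset.sum_ite_eq']
  simp

/-- One-step recursion for the avoiding probabilities. -/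
lemma avoid_step (hμ : IsPathMeasure P μ) (B : Set S) (n : ℕ) (s : S) :
    μ s (avoidSet B (n + 1)) =
      (if s ∈ B then 0 else 1) * ∑ a : S, (P s) a * μ a (avoidSet B n) := by
  classical
  rw [pathsum P μ hμ B (n + 1) s]
  -- reindex the LHS by (head, tail)
  rw [← Equiv.sum_comp (Fin.consEquiv (fun _ : Fin (n + 2) => S)), Fintype.sum_prod_type]
  -- pointwise computation of the LHS term
  have hterm : ∀ (a : S) (y : Fin (n + 1) → S),
      (if ∀ i : Fin (n + 2), (Fin.cons a y : Fin (n + 2) → S) i ∉ B then pathW P s (n + 1) (extend' (n + 1) (Fin.cons a y))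
        else 0) =
      if a = s then ((if s ∈ B then 0 else 1) *
        (if ∀ i, y i ∉ B then
          (P s) (extend' n y 0) *
            ∏ i ∈ Finset.range n, (P (extend' n y i)) (extend' n y (i + 1))
          else 0)) else 0 := by
    intro a y
    have hcond : (∀ i : Fin (n + 2), (Fin.cons a y : Fin (n + 2) → S) i ∉ B) ↔ (a ∉ B ∧ ∀ i, y i ∉ B) := by
      constructor
      · intro h
        exact ⟨by simpa using h 0, fun i => by simpa using h i.succ⟩
      · rintro ⟨h1, h2⟩ i
        refine Fin.cases ?_ ?_ i
        · simpa using h1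
        · intro j; simpa using h2 j
    have hW : pathW P s (n + 1) (extend' (n + 1) (Fin.cons a y)) =
        (if a = s then 1 else 0) * ((P a) (extend' n y 0) *
          ∏ i ∈ Finset.range n, (P (extend' n y i)) (extend' n y (i + 1))) := by
      unfold pathW
      rw [Finset.prod_range_succ']
      have e0 : extend' (n + 1) (Fin.cons a y) 0 = a := extend'_cons_zero a y
      have es : ∀ i : ℕ, extend' (n + 1) (Fin.cons a y) (i + 1) = extend' n y i :=
        extend'_cons_succ a y
      rw [e0, es 0]
      have hpr : ∀ i ∈ Finset.range n,
          (P (extend' (n + 1) (Fin.cons a y) (i + 1)))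
              (extend' (n + 1) (Fin.cons a y) (i + 1 + 1)) =
            (P (extend' n y i)) (extend' n y (i + 1)) := by
        intro i _
        rw [es i, es (i + 1)]
      rw [Finset.prod_congr rfl hpr]
      ring
    rw [hW]
    by_cases has : a = s
    · subst has
      simp only [if_pos rfl, one_mul]
      by_cases haB : a ∈ B
      · have hb : ¬ (∀ i : Fin (n + 2), (Fin.cons a y : Fin (n + 2) → S) i ∉ B) := fun h => (hcond.mp h).1 haB
        simp [hb, haB]
      · by_cases hy : ∀ i, y i ∉ B
        · have hb : ∀ i : Fin (n + 2), (Fin.cons a y : Fin (n + 2) → S) i ∉ B := hcond.mpr ⟨haB, hy⟩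
          simp [hb, haB, hy]
        · have hb : ¬ (∀ i : Fin (n + 2), (Fin.cons a y : Fin (n + 2) → S) i ∉ B) := fun h => hy (hcond.mp h).2
          simp [hb, haB, hy]
    · simp only [if_neg has, zero_mul]
      split_ifs <;> rfl
  have happ : ∀ (a : S) (y : Fin (n + 1) → S),
      (Fin.consEquiv fun _ : Fin (n + 2) => S) (a, y) = Fin.cons a y := fun _ _ => rfl
  simp only [happ]
  rw [Finset.sum_congr rfl (fun a _ => Finset.sum_congr rfl (fun y _ => hterm a y))]
  rw [Finset.sum_comm]
  rw [Finset.sum_congr rfl (fun y (_ : y ∈ (Finset.univ : Finset (Fin (n + 1) → S))) =>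
    Finset.sum_ite_eq' (Finset.univ : Finset S) s
      (fun _ => (if s ∈ B then 0 else 1) *
        (if ∀ i, y i ∉ B then (P s) (extend' n y 0) *
          ∏ i ∈ Finset.range n, (P (extend' n y i)) (extend' n y (i + 1)) else 0)))]
  simp only [Finset.mem_univ, if_true]
  rw [← Finset.mul_sum]
  congr 1
  -- remaining: ∑ y, [..] = ∑ a, P s a * μ a (avoidSet B n)
  have hsum : ∀ a : S, μ a (avoidSet B n) =
      ∑ y : Fin (n + 1) → S, if ∀ i, y i ∉ B then pathW P a n (extend' n y) else 0 :=
    fun a => pathsum P μ hμ B n a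
  rw [Finset.sum_congr rfl (fun a (_ : a ∈ (Finset.univ : Finset S)) => by rw [hsum a])]
  simp only [Finset.mul_sum]
  rw [Finset.sum_comm]
  refine Finset.sum_congr rfl fun y _ => ?_
  by_cases hy : ∀ i : Fin (n + 1), y i ∉ B
  · rw [if_pos hy]
    have h2 : ∀ a : S,
        (P s) a * (if ∀ i : Fin (n + 1), y i ∉ B then pathW P a n (extend' n y) else 0) =
        if extend' n y 0 = a then (P s) a *
          ∏ i ∈ Finset.range n, (P (extend' n y i)) (extend' n y (i + 1)) else 0 := by
      intro a
      rw [if_pos hy]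
      unfold pathW
      split_ifs with h <;> simp
    rw [Finset.sum_congr rfl fun a _ => h2 a, Finset.sum_ite_eq]
    simp
  · rw [if_neg hy]
    have h2 : ∀ a : S,
        (P s) a * (if ∀ i : Fin (n + 1), y i ∉ B then pathW P a n (extend' n y) else 0) =
        0 := by
      intro a; rw [if_neg hy, mul_zero]
    rw [Finset.sum_congr rfl fun a _ => h2 a]
    simp

/-- Block decay estimate. -/
lemma avoid_block (hμ : IsPathMeasure P μ) (B : Set S) {n : ℕ} {c : ℝ≥0∞}
    (hc : ∀ a, μ a (avoidSet B n) ≤ c) :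
    ∀ m s, μ s (avoidSet B (m + n)) ≤ c * μ s (avoidSet B m) := by
  intro m
  induction m with
  | zero =>
    intro s
    rw [Nat.zero_add, avoid_zero P μ hμ B s]
    by_cases hs : s ∈ B
    · rw [if_pos hs, mul_zero]
      have h0 : μ s (avoidSet B n) ≤ μ s (avoidSet B 0) :=
        measure_mono (avoid_mono B (Nat.zero_le n))
      rw [avoid_zero P μ hμ B s, if_pos hs] at h0
      exact h0
    · rw [if_neg hs, mul_one]; exact hc s
  | succ m ih =>
    intro s
    have hmn : m + 1 + n = (m + n) + 1 := by omega
    rw [hmn, avoid_step P μ hμ B (m + n) s, avoid_step P μ hμ B m s, mul_left_comm]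
    refine mul_le_mul_right ?_ _
    rw [Finset.mul_sum]
    refine Finset.sum_le_sum fun a _ => ?_
    rw [mul_left_comm]
    exact mul_le_mul_right (ih a) _

end Path

/-- for an absorbing `Acc`, almost every path eventually enters `Acc` or
the set `U` of states from which the chain is almost surely safe. -/
theorem ae_eventually_reach_acc_or_safe_states
    [Fintype S] [Nonempty S] [MeasurableSpace S] [MeasurableSingletonClass S]
    (P : S → PMF S) (Acc : Set S) (μ : S → Measure (ℕ → S))
    (hμ : IsPathMeasure P μ)
    (habs : ∀ s ∈ Acc, (P s).support ⊆ Acc) :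
    ∀ s : S,
      μ s {ω | ∀ t, ω t ∉ Acc ∪ {s' | μ s' {ω | ∀ t, ω t ∉ Acc} = 1}} = 0 := by
  classical
  intro s
  have hprob : ∀ a, IsProbabilityMeasure (μ a) := hμ.1
  set U : Set S := {s' | μ s' {ω | ∀ t, ω t ∉ Acc} = 1} with hU
  set B : Set S := Acc ∪ U with hB
  have hsafe : {ω : ℕ → S | ∀ t, ω t ∉ Acc} = ⋂ n, avoidSet Acc n := by
    ext ω
    constructor
    · intro h
      exact Set.mem_iInter.mpr fun n i _ => h i
    · intro h t
      exact Set.mem_iInter.mp h t t le_rfl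
  have hexists : ∀ a, a ∉ B → ∃ n, μ a (avoidSet Acc n) < 1 := by
    intro a ha
    by_contra hcon
    push_neg at hcon
    have hone : ∀ n, μ a (avoidSet Acc n) = 1 := fun n =>
      le_antisymm (haveI := hprob a; prob_le_one) (hcon n)
    have hanti : Antitone (fun n => avoidSet (S := S) Acc n) :=
      fun m n hmn => avoid_mono Acc hmn
    have htend : Filter.Tendsto (fun n => μ a (avoidSet Acc n)) Filter.atTop
        (nhds (μ a (⋂ n, avoidSet Acc n))) :=
      tendsto_measure_iInter_atTop (fun n => (measurableSet_avoid Acc n).nullMeasurableSet)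
        hanti ⟨0, by simp [hone 0]⟩
    have hlim : μ a (⋂ n, avoidSet Acc n) = 1 := by
      have h1 : Filter.Tendsto (fun _ : ℕ => (1 : ℝ≥0∞)) Filter.atTop
          (nhds (μ a (⋂ n, avoidSet Acc n))) := by
        simpa only [hone] using htend
      exact tendsto_nhds_unique h1 tendsto_const_nhds
    exact ha (Or.inr (by rw [hU, Set.mem_setOf_eq, hsafe]; exact hlim))
  -- uniform horizon
  let nf : S → ℕ := fun a => if h : ∃ n, μ a (avoidSet Acc n) < 1 then h.choose else 0
  set N : ℕ := Finset.univ.sup nf with hN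
  have hNδ : ∀ a, a ∉ B → μ a (avoidSet Acc N) < 1 := by
    intro a ha
    have h := hexists a ha
    have h1 : μ a (avoidSet Acc (nf a)) < 1 := by
      simp only [nf]; rw [dif_pos h]; exact h.choose_spec
    have hle : nf a ≤ N := Finset.le_sup (Finset.mem_univ a)
    exact lt_of_le_of_lt (measure_mono (avoid_mono Acc hle)) h1
  set δ : ℝ≥0∞ :=
    (Finset.univ.filter (fun a : S => a ∉ B)).sup (fun a => μ a (avoidSet Acc N)) with hδdef
  have hδ1 : δ < 1 := by
    rw [hδdef, Finset.sup_lt_iff (show (⊥ : ℝ≥0∞) < 1 by simp)]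
    intro a ha
    exact hNδ a ((Finset.mem_filter.mp ha).2)
  have hstep : ∀ a, μ a (avoidSet B N) ≤ δ := by
    intro a
    by_cases ha : a ∈ B
    · have h0 : μ a (avoidSet B N) ≤ μ a (avoidSet B 0) :=
        measure_mono (avoid_mono B (Nat.zero_le N))
      rw [avoid_zero P μ hμ B a, if_pos ha] at h0
      exact h0.trans zero_le
    · have h1 : μ a (avoidSet B N) ≤ μ a (avoidSet Acc N) :=
        measure_mono (fun ω hω i hi hAcc => hω i hi (Or.inl hAcc))
      refine h1.trans ?_
      rw [hδdef]
      exact Finset.le_sup (f := fun a => μ a (avoidSet Acc N))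
        (Finset.mem_filter.mpr ⟨Finset.mem_univ a, ha⟩)
  have hpow : ∀ k, μ s (avoidSet B (k * N)) ≤ δ ^ k := by
    intro k
    induction k with
    | zero => simpa using (haveI := hprob s; prob_le_one)
    | succ k ih =>
      rw [Nat.succ_mul]
      calc μ s (avoidSet B (k * N + N)) ≤ δ * μ s (avoidSet B (k * N)) :=
            avoid_block P μ hμ B hstep (k * N) s
        _ ≤ δ * δ ^ k := mul_le_mul_right ih δ
        _ = δ ^ (k + 1) := by rw [pow_succ, mul_comm]
  have hsub : ∀ k, {ω : ℕ → S | ∀ t, ω t ∉ B} ⊆ avoidSet B (k * N) :=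
    fun k ω hω i _ => hω i
  have hbound : ∀ k, μ s {ω : ℕ → S | ∀ t, ω t ∉ B} ≤ δ ^ k :=
    fun k => (measure_mono (hsub k)).trans (hpow k)
  have h0 : μ s {ω : ℕ → S | ∀ t, ω t ∉ B} ≤ 0 :=
    ge_of_tendsto' (ENNReal.tendsto_pow_atTop_nhds_zero_of_lt_one hδ1) hbound
  exact le_antisymm h0 zero_le
end

section
/- For every optimal policy π* and every state s ∈ S: μ^{π*}_s(Safe) = μ^{π*}_s({ω : ∃ t, ω t ∈ W}), i.e., under an optimal policy the probability of satisfying the safety condition equals the probability of eventually reaching the winning region W. -/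
open MeasureTheory Set
open scoped ENNReal Classical

variable {S : Type*}

variable {A : S → Type*}

section AuxMachinery

variable {S : Type*} [Fintype S] [MeasurableSpace S] [MeasurableSingletonClass S]

def scons {S : Type*} (s : S) (ω : ℕ → S) : ℕ → S
  | 0 => s
  | (k+1) => ω k

@[simp] lemma scons_zero {S : Type*} (s : S) (ω : ℕ → S) : scons s ω 0 = s := rfl
@[simp] lemma scons_succ {S : Type*} (s : S) (ω : ℕ → S) (k : ℕ) : scons s ω (k+1) = ω k := rfl

noncomputable def Wt (p : S → S → ℝ≥0∞) (s : S) (n : ℕ) (x : ℕ → S) : ℝ≥0∞ :=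
  (if x 0 = s then 1 else 0) * ∏ i ∈ Finset.range n, p (x i) (x (i + 1))

def pad {S : Type*} (n : ℕ) (y : Fin (n + 1) → S) : ℕ → S := fun i => y ⟨min i n, by omega⟩

lemma pad_le {S : Type*} {n : ℕ} (y : Fin (n + 1) → S) {i : ℕ} (h : i ≤ n) :
    pad n y i = y ⟨i, by omega⟩ := by
  simp [pad, Nat.min_eq_left h]

lemma pad_cons {S : Type*} (n : ℕ) (a : S) (z : Fin (n+1) → S) :
    pad (n+1) (Fin.cons a z) = scons a (pad n z) := by
  funext i
  cases i with
  | zero =>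
    have h0 : (⟨min 0 (n+1), by omega⟩ : Fin (n+2)) = 0 := by ext; simp
    simp only [pad, scons_zero, h0, Fin.cons_zero]
  | succ k =>
    have h1 : (⟨min (k+1) (n+1), by omega⟩ : Fin (n+2)) =
        Fin.succ ⟨min k n, by omega⟩ := by
      ext; simp [Nat.succ_min_succ]
    simp only [pad, scons_succ, h1, Fin.cons_succ]

lemma Wt_scons (p : S → S → ℝ≥0∞) (s a : S) (n : ℕ) (x : ℕ → S) :
    Wt p s (n+1) (scons a x) =
      (if a = s then 1 else 0) *
        (p a (x 0) * ∏ i ∈ Finset.range n, p (x i) (x (i+1))) := by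
  unfold Wt
  rw [Finset.prod_range_succ']
  simp only [scons_zero, scons_succ]
  by_cases h : a = s <;> simp [h, mul_comm, mul_assoc, mul_left_comm]

lemma master (ν : S → Measure (ℕ → S)) (p : S → S → ℝ≥0∞)
    (hν : ∀ s n (x : ℕ → S), ν s {ω | ∀ i ≤ n, ω i = x i}
        = (if x 0 = s then 1 else 0) * ∏ i ∈ Finset.range n, p (x i) (x (i+1)))
    (s : S) (n : ℕ) (Q : (ℕ → S) → Prop)
    (hQ : ∀ ω ω' : ℕ → S, (∀ i ≤ n, ω i = ω' i) → Q ω → Q ω') :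
    ν s {ω | Q ω} = ∑ y : Fin (n+1) → S,
      if Q (pad n y) then Wt p s n (pad n y) else 0 := by
  classical
  set U : (Fin (n+1) → S) → Set (ℕ → S) := fun y => {ω | ∀ i ≤ n, ω i = pad n y i} with hU
  have hUmeas : ∀ y, MeasurableSet (U y) := by
    intro y
    have : U y = ⋂ (i : ℕ) (_ : i ≤ n), {ω : ℕ → S | ω i = pad n y i} := by
      ext ω; simp [hU, Set.mem_iInter]
    rw [this]
    exact MeasurableSet.iInter fun i => MeasurableSet.iInter fun _ =>
      (measurable_pi_apply i) (measurableSet_singleton _)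
  have hset : {ω | Q ω} = ⋃ y ∈ Finset.univ.filter (fun y => Q (pad n y)), U y := by
    ext ω
    constructor
    · intro hω
      set y : Fin (n+1) → S := fun j => ω j with hy
      have hagree : ∀ i ≤ n, ω i = pad n y i := fun i hi => by
        rw [pad_le _ hi]
      exact Set.mem_biUnion
        (Finset.mem_filter.2 ⟨Finset.mem_univ _, hQ ω _ hagree hω⟩) hagree
    · rintro ⟨_, ⟨y, rfl⟩, hy⟩
      simp only [Set.mem_iUnion, Finset.mem_coe, Finset.mem_filter] at hy
      obtain ⟨⟨-, hQy⟩, hωy⟩ := hy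
      exact hQ _ ω (fun i hi => (hωy i hi).symm) hQy
  have hdisj : (↑(Finset.univ.filter (fun y => Q (pad n y))) :
      Set (Fin (n+1) → S)).PairwiseDisjoint U := by
    intro y _ y' _ hne
    refine Set.disjoint_left.2 fun ω hy hy' => hne ?_
    funext j
    have h1 := hy j (by omega : (j:ℕ) ≤ n)
    have h2 := hy' j (by omega : (j:ℕ) ≤ n)
    rw [pad_le _ (by omega)] at h1 h2
    have : y ⟨j, by omega⟩ = y' ⟨j, by omega⟩ := h1 ▸ h2
    simpa [Fin.eta] using this
  rw [hset, measure_biUnion_finset hdisj (fun y _ => hUmeas y)]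
  rw [Finset.sum_filter]
  exact Finset.sum_congr rfl fun y _ => by
    split
    · exact hν s n (pad n y)
    · rfl

lemma step (ν : S → Measure (ℕ → S)) (p : S → S → ℝ≥0∞)
    (hν : ∀ s n (x : ℕ → S), ν s {ω | ∀ i ≤ n, ω i = x i}
        = (if x 0 = s then 1 else 0) * ∏ i ∈ Finset.range n, p (x i) (x (i+1)))
    (s : S) (n : ℕ) (Q : (ℕ → S) → Prop)
    (hQ : ∀ ω ω' : ℕ → S, (∀ i ≤ n + 1, ω i = ω' i) → Q ω → Q ω') :
    ν s {ω | Q ω} = ∑ s' : S, p s s' * ν s' {ω | Q (scons s ω)} := by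
  classical
  have hQ' : ∀ ω ω' : ℕ → S, (∀ i ≤ n, ω i = ω' i) → Q (scons s ω) → Q (scons s ω') := by
    intro ω ω' h hq
    refine hQ _ _ (fun i hi => ?_) hq
    cases i with
    | zero => rfl
    | succ k => exact h k (by omega)
  -- canonical middle form
  set G : (Fin (n+1) → S) → ℝ≥0∞ := fun z =>
    if Q (scons s (pad n z)) then
      p s (pad n z 0) * ∏ i ∈ Finset.range n, p (pad n z i) (pad n z (i+1))
    else 0 with hG
  have hLHS : ν s {ω | Q ω} = ∑ z : Fin (n+1) → S, G z := by
    rw [master ν p hν s (n+1) Q hQ]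
    rw [← Equiv.sum_comp (Fin.consEquiv (fun _ : Fin (n+2) => S))
      (fun y => if Q (pad (n+1) y) then Wt p s (n+1) (pad (n+1) y) else 0),
      Fintype.sum_prod_type]
    have hterm : ∀ (a : S) (z : Fin (n+1) → S),
        (if Q (pad (n+1) (Fin.cons a z)) then Wt p s (n+1) (pad (n+1) (Fin.cons a z)) else 0)
          = if a = s then
              (if Q (scons a (pad n z)) then
                p a (pad n z 0) * ∏ i ∈ Finset.range n, p (pad n z i) (pad n z (i+1))
              else 0)
            else 0 := by
      intro a z
      rw [pad_cons, Wt_scons]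
      by_cases hq : Q (scons a (pad n z)) <;> by_cases has : a = s <;> simp [hq, has]
    calc (∑ a : S, ∑ z : Fin (n+1) → S,
            ((fun y => if Q (pad (n+1) y) then Wt p s (n+1) (pad (n+1) y) else 0)
              ((Fin.consEquiv (fun _ : Fin (n+2) => S)) (a, z))))
        = ∑ a : S, if a = s then (∑ z : Fin (n+1) → S,
            (if Q (scons a (pad n z)) then
                p a (pad n z 0) * ∏ i ∈ Finset.range n, p (pad n z i) (pad n z (i+1))
              else 0)) else 0 := by
          refine Finset.sum_congr rfl fun a _ => ?_
          by_cases has : a = s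
          · simp only [has, if_pos rfl]
            refine Finset.sum_congr rfl fun z _ => ?_
            rw [show (Fin.consEquiv (fun _ : Fin (n+2) => S)) (s, z) = Fin.cons s z from rfl,
              hterm s z]
            simp
          · simp only [if_neg has]
            refine Finset.sum_eq_zero fun z _ => ?_
            rw [show (Fin.consEquiv (fun _ : Fin (n+2) => S)) (a, z) = Fin.cons a z from rfl,
              hterm a z, if_neg has]
      _ = ∑ z : Fin (n+1) → S, G z := by
          rw [Finset.sum_ite_eq' Finset.univ s]
          simp [hG]
  have hRHS : ∑ s' : S, p s s' * ν s' {ω | Q (scons s ω)} = ∑ z : Fin (n+1) → S, G z := by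
    have hm : ∀ s' : S, ν s' {ω | Q (scons s ω)} = ∑ z : Fin (n+1) → S,
        if Q (scons s (pad n z)) then Wt p s' n (pad n z) else 0 := by
      intro s'
      exact master ν p hν s' n (fun ω => Q (scons s ω)) hQ'
    calc ∑ s' : S, p s s' * ν s' {ω | Q (scons s ω)}
        = ∑ s' : S, ∑ z : Fin (n+1) → S,
            p s s' * (if Q (scons s (pad n z)) then Wt p s' n (pad n z) else 0) := by
          refine Finset.sum_congr rfl fun s' _ => ?_
          rw [hm s', Finset.mul_sum]
      _ = ∑ z : Fin (n+1) → S, ∑ s' : S,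
            p s s' * (if Q (scons s (pad n z)) then Wt p s' n (pad n z) else 0) :=
          Finset.sum_comm
      _ = ∑ z : Fin (n+1) → S, G z := by
          refine Finset.sum_congr rfl fun z _ => ?_
          have : ∀ s' : S, p s s' * (if Q (scons s (pad n z)) then Wt p s' n (pad n z) else 0)
              = if (pad n z 0) = s' then
                  (if Q (scons s (pad n z)) then
                    p s s' * ∏ i ∈ Finset.range n, p (pad n z i) (pad n z (i+1))
                  else 0) else 0 := by
            intro s'
            unfold Wt
            by_cases hq : Q (scons s (pad n z)) <;> by_cases h0 : pad n z 0 = s' <;>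
              simp [hq, h0, mul_comm, mul_assoc, mul_left_comm]
          rw [Finset.sum_congr rfl fun s' _ => this s', Finset.sum_ite_eq Finset.univ (pad n z 0)]
          simp [hG]
  rw [hLHS, hRHS]

section Prob
variable (ν : S → Measure (ℕ → S)) (p : S → S → ℝ≥0∞)
variable (hν : ∀ s n (x : ℕ → S), ν s {ω | ∀ i ≤ n, ω i = x i}
        = (if x 0 = s then 1 else 0) * ∏ i ∈ Finset.range n, p (x i) (x (i+1)))
variable (hprob : ∀ s, IsProbabilityMeasure (ν s))

include hν

lemma start_one (s : S) : ν s {ω | ω 0 = s} = 1 := by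
  have h := hν s 0 (fun _ => s)
  have he : {ω : ℕ → S | ∀ i ≤ 0, ω i = (fun _ => s) i} = {ω : ℕ → S | ω 0 = s} := by
    ext ω; simp [Nat.le_zero]
  rw [he] at h
  simpa using h

include hprob

lemma start_null (s : S) {X : Set (ℕ → S)} (hX : X ⊆ {ω | ω 0 ≠ s}) : ν s X = 0 := by
  haveI := hprob s
  refine measure_mono_null hX ?_
  have hm : MeasurableSet {ω : ℕ → S | ω 0 = s} := by
    have : {ω : ℕ → S | ω 0 = s} = (fun ω : ℕ → S => ω 0) ⁻¹' {s} := rfl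
    rw [this]; exact (measurable_pi_apply 0) (measurableSet_singleton s)
  have he : {ω : ℕ → S | ω 0 ≠ s} = {ω : ℕ → S | ω 0 = s}ᶜ := rfl
  rw [he, measure_compl hm (measure_ne_top _ _), start_one ν p hν s]
  simp

lemma coord_zero (C : Set S) (s : S) :
    ν s {ω | ω 0 ∈ C} = if s ∈ C then 1 else 0 := by
  haveI := hprob s
  by_cases hs : s ∈ C
  · rw [if_pos hs]
    refine le_antisymm prob_le_one ?_
    calc (1:ℝ≥0∞) = ν s {ω | ω 0 = s} := (start_one ν p hν s).symm
    _ ≤ ν s {ω | ω 0 ∈ C} := measure_mono (fun ω h => by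
        rw [Set.mem_setOf_eq] at h ⊢; rw [h]; exact hs)
  · rw [if_neg hs]
    exact start_null ν p hν hprob s (fun ω h h0 => hs (h0 ▸ h))

omit hprob

lemma stay_succ (C : Set S) (s : S) (n : ℕ) :
    ν s {ω | ∀ i ≤ n + 1, ω i ∈ C} =
      (if s ∈ C then 1 else 0) * ∑ s' : S, p s s' * ν s' {ω | ∀ i ≤ n, ω i ∈ C} := by
  rw [step ν p hν s n (fun ω => ∀ i ≤ n + 1, ω i ∈ C)
    (fun ω ω' h hq i hi => (h i hi) ▸ hq i hi)]
  by_cases hs : s ∈ C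
  · rw [if_pos hs, one_mul]
    refine Finset.sum_congr rfl fun s' _ => ?_
    congr 2
    ext ω
    simp only [Set.mem_setOf_eq]
    constructor
    · intro h i hi
      have := h (i+1) (by omega)
      simpa using this
    · intro h i hi
      cases i with
      | zero => simpa using hs
      | succ k => simpa using h k (by omega)
  · rw [if_neg hs, zero_mul]
    refine Finset.sum_eq_zero fun s' _ => ?_
    have he : {ω : ℕ → S | ∀ i ≤ n + 1, scons s ω i ∈ C} = ∅ := by
      ext ω
      simp only [Set.mem_setOf_eq, Set.mem_empty_iff_false, iff_false, not_forall]
      exact ⟨0, by omega, by simpa using hs⟩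
    rw [he]
    simp

lemma acc_succ (Acc : Set S) (s : S) (t : ℕ) :
    ν s {ω | ω (t+1) ∈ Acc} = ∑ s' : S, p s s' * ν s' {ω | ω t ∈ Acc} := by
  rw [step ν p hν s t (fun ω => ω (t+1) ∈ Acc)
    (fun ω ω' h hq => by
      show ω' (t+1) ∈ Acc
      rw [← h (t+1) (by omega)]; exact hq)]
  rfl

lemma joint_succ (Acc : Set S) (w : S) (s : S) (t k : ℕ) :
    ν s {ω | ω (t+1) = w ∧ ω (k+1) ∈ Acc} =
      ∑ s' : S, p s s' * ν s' {ω | ω t = w ∧ ω k ∈ Acc} := by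
  rw [step ν p hν s (max t k) (fun ω => ω (t+1) = w ∧ ω (k+1) ∈ Acc)
    (fun ω ω' h hq => by
      show ω' (t+1) = w ∧ ω' (k+1) ∈ Acc
      rw [← h (t+1) (Nat.succ_le_succ (Nat.le_max_left t k)),
        ← h (k+1) (Nat.succ_le_succ (Nat.le_max_right t k))]
      exact hq)]
  rfl

end Prob

section Analysis

variable {S : Type*}

lemma Gam_pos {Acc : Set S} {γ γacc : ℝ} (hγ : 0 < γ ∧ γ < 1) (hγacc : 0 < γacc ∧ γacc < 1)
    (s : S) : 0 < Γw Acc γacc γ s := by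
  unfold Γw; split
  · exact hγacc.1
  · exact hγ.1

lemma Gam_le {Acc : Set S} {γ γacc : ℝ} (s : S) : Γw Acc γacc γ s ≤ max γ γacc := by
  unfold Γw; split
  · exact le_max_right _ _
  · exact le_max_left _ _

lemma Rw_nonpos {Acc : Set S} {rn γacc : ℝ} (hrn : rn < 0) (hγacc : 0 < γacc ∧ γacc < 1)
    (s : S) : Rw Acc γacc rn s ≤ 0 := by
  unfold Rw; split
  · exact le_of_lt (mul_neg_of_pos_of_neg (by linarith [hγacc.2]) hrn)
  · exact le_rfl

lemma Rw_abs_le {Acc : Set S} {rn γacc : ℝ} (hrn : rn < 0) (hγacc : 0 < γacc ∧ γacc < 1)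
    (s : S) : |Rw Acc γacc rn s| ≤ (1 - γacc) * (-rn) := by
  unfold Rw; split
  · rw [abs_of_nonpos (le_of_lt (mul_neg_of_pos_of_neg (by linarith [hγacc.2]) hrn))]
    ring_nf
    exact le_rfl
  · rw [abs_zero]
    exact mul_nonneg (by linarith [hγacc.2]) (by linarith)

noncomputable def term (Acc : Set S) (γacc γ rn : ℝ) (ω : ℕ → S) (t : ℕ) : ℝ :=
  Rw Acc γacc rn (ω (t + 1)) * ∏ k ∈ Finset.range t, Γw Acc γacc γ (ω (k + 1))

lemma prod_Gam_nonneg {Acc : Set S} {γ γacc : ℝ} (hγ : 0 < γ ∧ γ < 1)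
    (hγacc : 0 < γacc ∧ γacc < 1) (ω : ℕ → S) (t : ℕ) :
    0 ≤ ∏ k ∈ Finset.range t, Γw Acc γacc γ (ω (k + 1)) :=
  Finset.prod_nonneg fun k _ => le_of_lt (Gam_pos hγ hγacc _)

lemma prod_Gam_pos {Acc : Set S} {γ γacc : ℝ} (hγ : 0 < γ ∧ γ < 1)
    (hγacc : 0 < γacc ∧ γacc < 1) (ω : ℕ → S) (t : ℕ) :
    0 < ∏ k ∈ Finset.range t, Γw Acc γacc γ (ω (k + 1)) :=
  Finset.prod_pos fun k _ => Gam_pos hγ hγacc _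

lemma prod_Gam_le {Acc : Set S} {γ γacc : ℝ} (hγ : 0 < γ ∧ γ < 1)
    (hγacc : 0 < γacc ∧ γacc < 1) (ω : ℕ → S) (t : ℕ) :
    ∏ k ∈ Finset.range t, Γw Acc γacc γ (ω (k + 1)) ≤ (max γ γacc) ^ t := by
  induction t with
  | zero => simp
  | succ n ih =>
    rw [Finset.prod_range_succ, pow_succ]
    exact mul_le_mul ih (Gam_le _) (le_of_lt (Gam_pos hγ hγacc _))
      (pow_nonneg (le_max_of_le_left (le_of_lt hγ.1)) n)

lemma term_nonpos {Acc : Set S} {rn γ γacc : ℝ} (hrn : rn < 0) (hγ : 0 < γ ∧ γ < 1)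
    (hγacc : 0 < γacc ∧ γacc < 1) (ω : ℕ → S) (t : ℕ) : term Acc γacc γ rn ω t ≤ 0 := by
  have h1 := Rw_nonpos (Acc := Acc) hrn hγacc (ω (t+1))
  have h2 := prod_Gam_nonneg (Acc := Acc) hγ hγacc ω t
  unfold term
  nlinarith

lemma term_abs_le {Acc : Set S} {rn γ γacc : ℝ} (hrn : rn < 0) (hγ : 0 < γ ∧ γ < 1)
    (hγacc : 0 < γacc ∧ γacc < 1) (ω : ℕ → S) (t : ℕ) :
    |term Acc γacc γ rn ω t| ≤ ((1 - γacc) * (-rn)) * (max γ γacc) ^ t := by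
  unfold term
  rw [abs_mul, abs_of_nonneg (prod_Gam_nonneg hγ hγacc ω t)]
  exact mul_le_mul (Rw_abs_le hrn hγacc _) (prod_Gam_le hγ hγacc ω t)
    (prod_Gam_nonneg hγ hγacc ω t)
    (mul_nonneg (by linarith [hγacc.2]) (by linarith))

lemma term_summable {Acc : Set S} {rn γ γacc : ℝ} (hrn : rn < 0) (hγ : 0 < γ ∧ γ < 1)
    (hγacc : 0 < γacc ∧ γacc < 1) (ω : ℕ → S) : Summable (term Acc γacc γ rn ω) :=
  Summable.of_norm_bounded
    ((summable_geometric_of_lt_one (le_max_of_le_left (le_of_lt hγ.1))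
      (max_lt hγ.2 hγacc.2)).mul_left _)
    (fun t => by rw [Real.norm_eq_abs]; exact term_abs_le hrn hγ hγacc ω t)

lemma Ret_eq_tsum_term {Acc : Set S} {rn γ γacc : ℝ} (ω : ℕ → S) :
    Ret Acc γacc γ rn ω = ∑' t, term Acc γacc γ rn ω t := rfl

lemma Ret_nonpos {Acc : Set S} {rn γ γacc : ℝ} (hrn : rn < 0) (hγ : 0 < γ ∧ γ < 1)
    (hγacc : 0 < γacc ∧ γacc < 1) (ω : ℕ → S) : Ret Acc γacc γ rn ω ≤ 0 :=
  tsum_nonpos (term_nonpos hrn hγ hγacc ω)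

lemma Ret_eq_zero {Acc : Set S} {rn γ γacc : ℝ} (ω : ℕ → S)
    (h : ∀ t, ω (t + 1) ∉ Acc) : Ret Acc γacc γ rn ω = 0 := by
  rw [Ret_eq_tsum_term]
  convert tsum_zero with t
  unfold term Rw
  rw [if_neg (h t), zero_mul]

lemma Ret_neg {Acc : Set S} {rn γ γacc : ℝ} (hrn : rn < 0) (hγ : 0 < γ ∧ γ < 1)
    (hγacc : 0 < γacc ∧ γacc < 1) (ω : ℕ → S) (t0 : ℕ) (h : ω (t0 + 1) ∈ Acc) :
    Ret Acc γacc γ rn ω < 0 := by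
  rw [Ret_eq_tsum_term]
  have hlt : term Acc γacc γ rn ω t0 < 0 := by
    unfold term Rw
    rw [if_pos h]
    exact mul_neg_of_neg_of_pos (mul_neg_of_pos_of_neg (by linarith [hγacc.2]) hrn)
      (prod_Gam_pos hγ hγacc ω t0)
  calc ∑' t, term Acc γacc γ rn ω t < ∑' _ : ℕ, (0:ℝ) :=
        Summable.tsum_lt_tsum (term_nonpos hrn hγ hγacc ω) hlt (term_summable hrn hγ hγacc ω)
          summable_zero
    _ = 0 := tsum_zero

lemma Ret_abs_le {Acc : Set S} {rn γ γacc : ℝ} (hrn : rn < 0) (hγ : 0 < γ ∧ γ < 1)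
    (hγacc : 0 < γacc ∧ γacc < 1) (ω : ℕ → S) :
    |Ret Acc γacc γ rn ω| ≤ ((1 - γacc) * (-rn)) * (1 - max γ γacc)⁻¹ := by
  rw [Ret_eq_tsum_term]
  have hb0 : (0:ℝ) ≤ max γ γacc := le_max_of_le_left (le_of_lt hγ.1)
  have hb1 : max γ γacc < 1 := max_lt hγ.2 hγacc.2
  have hsum := term_summable (Acc := Acc) (rn := rn) hrn hγ hγacc ω
  have hgeo : Summable (fun t : ℕ => ((1 - γacc) * (-rn)) * (max γ γacc) ^ t) :=
    (summable_geometric_of_lt_one hb0 hb1).mul_left _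
  calc |∑' t, term Acc γacc γ rn ω t| = ‖∑' t, term Acc γacc γ rn ω t‖ :=
        (Real.norm_eq_abs _).symm
    _ ≤ ∑' t, ‖term Acc γacc γ rn ω t‖ :=
        norm_tsum_le_tsum_norm (by simpa [Real.norm_eq_abs] using hsum.abs)
    _ = ∑' t, |term Acc γacc γ rn ω t| := by simp [Real.norm_eq_abs]
    _ ≤ ∑' t, ((1 - γacc) * (-rn)) * (max γ γacc) ^ t :=
        Summable.tsum_le_tsum (fun t => term_abs_le hrn hγ hγacc ω t) hsum.abs hgeo
    _ = ((1 - γacc) * (-rn)) * (1 - max γ γacc)⁻¹ := by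
        rw [tsum_mul_left, tsum_geometric_of_lt_one hb0 hb1]

lemma Ret_measurable [MeasurableSpace S] [Finite S] [MeasurableSingletonClass S]
    {Acc : Set S} {rn γ γacc : ℝ} (hrn : rn < 0) (hγ : 0 < γ ∧ γ < 1)
    (hγacc : 0 < γacc ∧ γacc < 1) : Measurable (Ret Acc γacc γ rn : (ℕ → S) → ℝ) := by
  have hterm : ∀ t : ℕ, Measurable (fun ω : ℕ → S => term Acc γacc γ rn ω t) := by
    intro t
    exact ((measurable_of_finite (Rw Acc γacc rn)).comp (measurable_pi_apply (t+1))).mul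
      (Finset.measurable_prod _ fun k _ =>
        (measurable_of_finite (Γw Acc γacc γ)).comp (measurable_pi_apply (k+1)))
  refine measurable_of_tendsto_metrizable
    (fun n => Finset.measurable_sum (Finset.range n) (fun t _ => hterm t)) ?_
  rw [tendsto_pi_nhds]
  intro ω
  exact (term_summable hrn hγ hγacc ω).hasSum.tendsto_sum_nat

end Analysis



end AuxMachinery

/-- under an optimal policy the probability of satisfying the safety
condition equals the probability of eventually reaching the winning region. -/
theorem optimal_policy_safety_prob_eq_reach_winning_region
    [Fintype S] [Nonempty S] [MeasurableSpace S] [MeasurableSingletonClass S]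
    [∀ s, Fintype (A s)] [∀ s, Nonempty (A s)]
    (P : (s : S) → A s → PMF S) (Acc : Set S)
    (habs : ∀ s ∈ Acc, ∀ a : A s, (P s a).support ⊆ Acc)
    (μ : ((s : S) → A s) → S → Measure (ℕ → S))
    (hμ : ∀ π : (s : S) → A s, IsPathMeasure (fun s => P s (π s)) (μ π))
    (rn γ γacc : ℝ) (hrn : rn < 0) (hγ : 0 < γ ∧ γ < 1) (hγacc : 0 < γacc ∧ γacc < 1)
    (πo : (s : S) → A s) (hopt : IsOptimal Acc γacc γ rn μ πo) :
    ∀ s : S, μ πo s {ω | ∀ t, ω t ∉ Acc} =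
      μ πo s {ω | ∃ t, ω t ∈ WinRegion Acc μ} := by
  classical
  intro s0
  obtain ⟨hprob, hν⟩ := hμ πo
  have hν' : ∀ (s : S) (n : ℕ) (x : ℕ → S), μ πo s {ω | ∀ i ≤ n, ω i = x i}
      = (if x 0 = s then 1 else 0) *
        ∏ i ∈ Finset.range n, (fun a b => (P a (πo a)) b) (x i) (x (i+1)) := hν
  set p : S → S → ℝ≥0∞ := fun a b => (P a (πo a)) b with hp
  have hAccMeas : MeasurableSet Acc := (Set.toFinite Acc).measurableSet
  have hcoordMeas : ∀ (t : ℕ) (B : Set S), MeasurableSet B →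
      MeasurableSet {ω : ℕ → S | ω t ∈ B} := by
    intro t B hB
    have he : {ω : ℕ → S | ω t ∈ B} = (fun ω : ℕ → S => ω t) ⁻¹' B := rfl
    rw [he]; exact measurable_pi_apply t hB
  have hSafeEq : {ω : ℕ → S | ∀ t, ω t ∉ Acc} = ⋂ t : ℕ, {ω : ℕ → S | ω t ∈ Acc}ᶜ := by
    ext ω; simp [Set.mem_iInter]
  have hSafeMeas : MeasurableSet {ω : ℕ → S | ∀ t, ω t ∉ Acc} := by
    rw [hSafeEq]; exact MeasurableSet.iInter fun t => (hcoordMeas t Acc hAccMeas).compl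
  have hpsum : ∀ x : S, ∑ b : S, p x b = 1 := by
    intro x
    have h := (P x (πo x)).tsum_coe
    rwa [tsum_fintype] at h
  -- Part A: winning states are safe under the optimal policy
  have hWsafe : ∀ w ∈ WinRegion Acc μ, w ∉ Acc ∧ μ πo w {ω | ∀ t, ω t ∉ Acc} = 1 := by
    intro w hw
    obtain ⟨π₁, hπ₁⟩ := hw
    obtain ⟨hprob₁, hν₁⟩ := hμ π₁
    haveI := hprob₁ w
    have hwAcc : w ∉ Acc := by
      by_contra hin
      have hsub : {ω : ℕ → S | ∀ t, ω t ∉ Acc} ⊆ {ω : ℕ → S | ω 0 ≠ w} :=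
        fun ω hs h0 => hs 0 (h0 ▸ hin)
      have h0 := start_null (μ π₁) (fun a b => (P a (π₁ a)) b) hν₁ hprob₁ w hsub
      rw [hπ₁] at h0
      exact one_ne_zero h0
    have hcompl₁ : μ π₁ w {ω : ℕ → S | ∀ t, ω t ∉ Acc}ᶜ = 0 := by
      rw [measure_compl hSafeMeas (measure_ne_top _ _), hπ₁, measure_univ]; simp
    have hval₁ : Valp Acc γacc γ rn μ π₁ w = 0 := by
      show (∫ ω, Ret Acc γacc γ rn ω ∂ (μ π₁ w)) = 0
      have hnull : μ π₁ w {ω : ℕ → S | ¬ (Ret Acc γacc γ rn ω = 0)} = 0 := by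
        refine measure_mono_null ?_ hcompl₁
        intro ω hne hsafe
        exact hne (Ret_eq_zero ω (fun t => hsafe (t+1)))
      have hae : (fun ω => Ret Acc γacc γ rn ω) =ᵐ[μ π₁ w] (fun _ => (0:ℝ)) := by
        rw [Filter.EventuallyEq, MeasureTheory.ae_iff]
        simpa using hnull
      rw [integral_congr_ae hae, integral_zero]
    have hbdd : BddAbove (Set.range fun π : (s' : S) → A s' => Valp Acc γacc γ rn μ π w) := by
      refine ⟨0, ?_⟩
      rintro x ⟨π, rfl⟩
      exact integral_nonpos fun ω => Ret_nonpos hrn hγ hγacc ω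
    have hvalw : Valp Acc γacc γ rn μ πo w = 0 := by
      rw [hopt w]
      refine le_antisymm
        (ciSup_le fun π => integral_nonpos fun ω => Ret_nonpos hrn hγ hγacc ω) ?_
      rw [← hval₁]
      exact le_ciSup hbdd π₁
    have hint : Integrable (Ret Acc γacc γ rn) (μ πo w) := by
      haveI := hprob w
      refine Integrable.mono'
        (integrable_const (((1 - γacc) * (-rn)) * (1 - max γ γacc)⁻¹))
        (Ret_measurable hrn hγ hγacc).aestronglyMeasurable (ae_of_all _ fun ω => ?_)
      rw [Real.norm_eq_abs]
      exact Ret_abs_le hrn hγ hγacc ω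
    have hzero : ∫ ω, -Ret Acc γacc γ rn ω ∂(μ πo w) = 0 := by
      rw [integral_neg]
      have hv : ∫ ω, Ret Acc γacc γ rn ω ∂(μ πo w) = 0 := hvalw
      rw [hv, neg_zero]
    have haez := (integral_eq_zero_iff_of_nonneg
      (fun ω => neg_nonneg.2 (Ret_nonpos hrn hγ hγacc ω)) hint.neg).1 hzero
    have hhitnull : μ πo w {ω : ℕ → S | ∃ t, ω (t+1) ∈ Acc} = 0 := by
      rw [Filter.EventuallyEq, MeasureTheory.ae_iff] at haez
      refine measure_mono_null ?_ haez
      rintro ω ⟨t, ht⟩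
      simp only [Set.mem_setOf_eq, Pi.zero_apply]
      exact fun h => absurd (neg_eq_zero.1 h) (ne_of_lt (Ret_neg hrn hγ hγacc ω t ht))
    have hsafe_w : μ πo w {ω | ∀ t, ω t ∉ Acc} = 1 := by
      haveI := hprob w
      rw [← prob_compl_eq_zero_iff hSafeMeas]
      have hsub : {ω : ℕ → S | ∀ t, ω t ∉ Acc}ᶜ ⊆
          {ω : ℕ → S | ω 0 ≠ w} ∪ {ω : ℕ → S | ∃ t, ω (t+1) ∈ Acc} := by
        intro ω hω
        rw [Set.mem_compl_iff, Set.mem_setOf_eq] at hω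
        push_neg at hω
        obtain ⟨t, ht⟩ := hω
        cases t with
        | zero => exact Or.inl (fun h0 => hwAcc (h0 ▸ ht))
        | succ k => exact Or.inr ⟨k, ht⟩
      refine measure_mono_null hsub
        (measure_union_null (start_null (μ πo) p hν' hprob w fun ω h => h) hhitnull)
    exact ⟨hwAcc, hsafe_w⟩
  -- absorption: from Acc you stay in Acc
  have hu1 : ∀ t, ∀ x ∈ Acc, μ πo x {ω : ℕ → S | ω t ∈ Acc} = 1 := by
    intro t
    induction t with
    | zero =>
      intro x hx
      have h := coord_zero (μ πo) p hν' hprob Acc x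
      rw [h, if_pos hx]
    | succ t ih =>
      intro x hx
      rw [acc_succ (μ πo) p hν' Acc x t]
      have hterm : ∀ b : S, p x b * μ πo b {ω : ℕ → S | ω t ∈ Acc} = p x b := by
        intro b
        by_cases hb : p x b = 0
        · rw [hb, zero_mul]
        · have hbAcc : b ∈ Acc := habs x hx (πo x) (by
            simpa [PMF.mem_support_iff] using hb)
          rw [ih b hbAcc, mul_one]
      rw [Finset.sum_congr rfl fun b _ => hterm b, hpsum x]
  -- Part A': reaching W and then hitting Acc is null
  have hjoint : ∀ w ∈ WinRegion Acc μ, ∀ (t k : ℕ) (x : S),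
      μ πo x {ω : ℕ → S | ω t = w ∧ ω k ∈ Acc} = 0 := by
    intro w hw t k x
    obtain ⟨hwAcc, hwSafe⟩ := hWsafe w hw
    have hwHit : ∀ m : ℕ, μ πo w {ω : ℕ → S | ω m ∈ Acc} = 0 := by
      intro m
      haveI := hprob w
      have hc : μ πo w {ω : ℕ → S | ∀ t, ω t ∉ Acc}ᶜ = 0 := by
        rw [measure_compl hSafeMeas (measure_ne_top _ _), hwSafe, measure_univ]; simp
      refine measure_mono_null ?_ hc
      intro ω hm hs
      exact hs m hm
    induction t generalizing k x with
    | zero =>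
      by_cases hx : x = w
      · subst hx
        exact measure_mono_null (fun ω h => h.2) (hwHit k)
      · exact start_null (μ πo) p hν' hprob x (fun ω h h0 => hx (h0.symm.trans h.1))
    | succ t ih =>
      cases k with
      | zero =>
        by_cases hx : x ∈ Acc
        · haveI := hprob x
          have h1 : μ πo x {ω : ℕ → S | ω (t+1) ∈ Acc}ᶜ = 0 := by
            rw [measure_compl (hcoordMeas (t+1) Acc hAccMeas) (measure_ne_top _ _),
              hu1 (t+1) x hx, measure_univ]
            simp
          exact measure_mono_null
            (fun ω h hmem => hwAcc (h.1 ▸ hmem)) h1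
        · exact start_null (μ πo) p hν' hprob x (fun ω h h0 => hx (h0 ▸ h.2))
      | succ k =>
        rw [joint_succ (μ πo) p hν' Acc w x t k]
        exact Finset.sum_eq_zero fun b _ => by rw [ih k b, mul_zero]
  have hReachDiff : μ πo s0
      ({ω : ℕ → S | ∃ t, ω t ∈ WinRegion Acc μ} \ {ω : ℕ → S | ∀ t, ω t ∉ Acc}) = 0 := by
    have hsub : {ω : ℕ → S | ∃ t, ω t ∈ WinRegion Acc μ} \ {ω : ℕ → S | ∀ t, ω t ∉ Acc} ⊆
        ⋃ (t : ℕ) (k : ℕ) (w : S) (_ : w ∈ WinRegion Acc μ),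
          {ω : ℕ → S | ω t = w ∧ ω k ∈ Acc} := by
      rintro ω ⟨⟨t, ht⟩, hns⟩
      rw [Set.mem_setOf_eq] at hns
      push_neg at hns
      obtain ⟨k, hk⟩ := hns
      exact Set.mem_iUnion.2 ⟨t, Set.mem_iUnion.2 ⟨k, Set.mem_iUnion.2 ⟨ω t,
        Set.mem_iUnion.2 ⟨ht, ⟨rfl, hk⟩⟩⟩⟩⟩
    refine measure_mono_null hsub ?_
    exact measure_iUnion_null fun t => measure_iUnion_null fun k =>
      measure_iUnion_null fun w => measure_iUnion_null fun hw => hjoint w hw t k s0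
  -- Part B: safe but never reaching W is null
  have hSafeDiff : μ πo s0
      ({ω : ℕ → S | ∀ t, ω t ∉ Acc} \ {ω : ℕ → S | ∃ t, ω t ∈ WinRegion Acc μ}) = 0 := by
    set C : Set S := {a : S | a ∉ Acc ∧ a ∉ WinRegion Acc μ} with hC
    set E : ℕ → Set (ℕ → S) := fun n => {ω | ∀ i ≤ n, ω i ∈ C} with hE
    have hEmono : ∀ {n m : ℕ}, n ≤ m → E m ⊆ E n :=
      fun hnm ω hω i hi => hω i (le_trans hi hnm)
    have he0 : E 0 = {ω : ℕ → S | ω 0 ∈ C} := by ext ω; simp [hE, Nat.le_zero]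
    have hE0 : ∀ x ∈ C, μ πo x (E 0) = 1 := by
      intro x hx
      have h := coord_zero (μ πo) p hν' hprob C x
      rw [if_pos hx] at h
      rw [he0]
      exact h
    have hE0' : ∀ x ∉ C, μ πo x (E 0) = 0 := by
      intro x hx
      have h := coord_zero (μ πo) p hν' hprob C x
      rw [if_neg hx] at h
      rw [he0]
      exact h
    have hlt1 : ∀ c ∈ C, ∃ n, μ πo c (E n) < 1 := by
      intro c hc
      haveI := hprob c
      have hnot : μ πo c {ω : ℕ → S | ∀ t, ω t ∉ Acc} ≠ 1 := fun h => hc.2 ⟨πo, h⟩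
      have hcompl : μ πo c {ω : ℕ → S | ∀ t, ω t ∉ Acc}ᶜ ≠ 0 :=
        fun h => hnot ((prob_compl_eq_zero_iff hSafeMeas).1 h)
      have hcup : {ω : ℕ → S | ∀ t, ω t ∉ Acc}ᶜ = ⋃ t : ℕ, {ω : ℕ → S | ω t ∈ Acc} := by
        rw [hSafeEq, Set.compl_iInter]; simp
      have hex : ∃ t : ℕ, μ πo c {ω : ℕ → S | ω t ∈ Acc} ≠ 0 := by
        by_contra h
        push_neg at h
        exact hcompl (by rw [hcup]; exact measure_iUnion_null h)
      obtain ⟨t, ht⟩ := hex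
      refine ⟨t, ?_⟩
      have hsub : E t ⊆ {ω : ℕ → S | ω t ∈ Acc}ᶜ := fun ω hω hmem => (hω t le_rfl).1 hmem
      calc μ πo c (E t) ≤ μ πo c {ω : ℕ → S | ω t ∈ Acc}ᶜ := measure_mono hsub
        _ < 1 := by
          rw [measure_compl (hcoordMeas t Acc hAccMeas) (measure_ne_top _ _), measure_univ]
          exact ENNReal.sub_lt_self ENNReal.one_ne_top one_ne_zero ht
    choose! F hF using hlt1
    set N : ℕ := Finset.univ.sup F with hN
    set a : ℝ≥0∞ := (Finset.univ.filter (fun c : S => c ∈ C)).sup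
      (fun c => μ πo c (E N)) with ha
    have haone : a < 1 := by
      rw [ha]
      refine (Finset.sup_lt_iff (f := fun c : S => μ πo c (E N))
        (a := (1 : ℝ≥0∞)) (by simp)).2 ?_
      intro c hcmem
      have hc : c ∈ C := (Finset.mem_filter.1 hcmem).2
      have hFN : F c ≤ N := by
        rw [hN]
        exact Finset.le_sup (Finset.mem_univ c)
      calc μ πo c (E N)
          ≤ μ πo c (E (F c)) := measure_mono (hEmono hFN)
        _ < 1 := hF c hc
    have hvN : ∀ c ∈ C, μ πo c (E N) ≤ a := by
      intro c hc
      rw [ha]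
      exact Finset.le_sup (f := fun c : S => μ πo c (E N))
        (Finset.mem_filter.2 ⟨Finset.mem_univ _, hc⟩)
    have hstepC : ∀ (n : ℕ) (x : S), x ∈ C → μ πo x (E (n+1)) =
        ∑ b : S, p x b * μ πo b (E n) := by
      intro n x hx
      have h := stay_succ (μ πo) p hν' C x n
      rw [if_pos hx, one_mul] at h
      exact h
    have hstepN : ∀ (n : ℕ) (x : S), x ∉ C → μ πo x (E (n+1)) = 0 := by
      intro n x hx
      have h := stay_succ (μ πo) p hν' C x n
      rw [if_neg hx, zero_mul] at h
      exact h
    have hcontr : ∀ (m : ℕ) (x : S), μ πo x (E (N + m)) ≤ a * μ πo x (E m) := by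
      intro m
      induction m with
      | zero =>
        intro x
        by_cases hx : x ∈ C
        · rw [hE0 x hx, mul_one]
          exact hvN x hx
        · have hle : μ πo x (E N) ≤ μ πo x (E 0) := measure_mono (hEmono (Nat.zero_le N))
          rw [hE0' x hx] at hle
          exact le_trans hle (by simp)
      | succ m ih =>
        intro x
        by_cases hx : x ∈ C
        · have h1 : μ πo x (E (N + (m+1))) =
              ∑ b : S, p x b * μ πo b (E (N + m)) := hstepC (N+m) x hx
          rw [h1, hstepC m x hx]
          calc ∑ b : S, p x b * μ πo b (E (N + m))
              ≤ ∑ b : S, p x b * (a * μ πo b (E m)) :=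
                Finset.sum_le_sum fun b _ => mul_le_mul' le_rfl (ih b)
            _ = a * ∑ b : S, p x b * μ πo b (E m) := by
                rw [Finset.mul_sum]
                exact Finset.sum_congr rfl fun b _ => by ring
        · have h0 : μ πo x (E (N + (m+1))) = 0 := hstepN (N+m) x hx
          rw [h0]
          exact zero_le
    have hpow : ∀ (k : ℕ) (x : S), μ πo x (E (k * N)) ≤ a ^ k := by
      intro k
      induction k with
      | zero =>
        intro x
        haveI := hprob x
        simpa using prob_le_one (μ := μ πo x) (s := E 0)
      | succ k ih =>
        intro x
        have he : (k+1) * N = N + k * N := by ring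
        rw [he, pow_succ]
        calc μ πo x (E (N + k * N)) ≤ a * μ πo x (E (k * N)) := hcontr (k*N) x
          _ ≤ a * a ^ k := mul_le_mul' le_rfl (ih x)
          _ = a ^ k * a := mul_comm _ _
    have hInter : μ πo s0 (⋂ n : ℕ, E n) = 0 := by
      have hle : ∀ k : ℕ, μ πo s0 (⋂ n : ℕ, E n) ≤ a ^ k := fun k =>
        le_trans (measure_mono (Set.iInter_subset _ (k * N))) (hpow k s0)
      have hlim := ge_of_tendsto'
        (ENNReal.tendsto_pow_atTop_nhds_zero_of_lt_one haone) hle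
      exact le_antisymm hlim zero_le
    refine measure_mono_null ?_ hInter
    rintro ω ⟨hsafe, hnr⟩
    rw [Set.mem_setOf_eq] at hsafe
    exact Set.mem_iInter.2 fun n i hi => ⟨hsafe i, fun hWi => hnr ⟨i, hWi⟩⟩
  have hae : {ω : ℕ → S | ∀ t, ω t ∉ Acc} =ᵐ[μ πo s0]
      {ω : ℕ → S | ∃ t, ω t ∈ WinRegion Acc μ} := by
    rw [MeasureTheory.ae_eq_set]
    exact ⟨hSafeDiff, hReachDiff⟩
  exact measure_congr hae
end
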